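/- arXiv:1912.04701 — 6 statements merged into one kernel-verified Lean document; each statement's English description precedes it below -/
import Mathlib

section
/- A simple symmetric random walk on Z^2 (each of the 4 unit steps with probability 1/4) is recurrent: with probability 1 it returns to the origin. -/
open MeasureTheory ProbabilityTheory

/-- A vector in `ℤ^k` is a unit coordinate step if it is `±e_j` for some coordinate `j`. -/
def IsUnitStep {k : ℕ} (v : Fin k → ℤ) : Prop :=
  ∃ j : Fin k, v = Pi.single j 1 ∨ v = -Pi.single j 1


namespace RW
open Finset

def stepv : Fin 4 → (Fin 2 → ℤ) :=
  ![Pi.single 0 1, -Pi.single 0 1, Pi.single 1 1, -Pi.single 1 1]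

lemma stepv_unit (d : Fin 4) : IsUnitStep (stepv d) := by
  fin_cases d
  · exact ⟨0, Or.inl rfl⟩
  · exact ⟨0, Or.inr rfl⟩
  · exact ⟨1, Or.inl rfl⟩
  · exact ⟨1, Or.inr rfl⟩

lemma isUnitStep_iff (v : Fin 2 → ℤ) : IsUnitStep v ↔ ∃ d, v = stepv d := by
  constructor
  · rintro ⟨j, h | h⟩ <;> fin_cases j
    · exact ⟨0, h⟩
    · exact ⟨2, h⟩
    · exact ⟨1, h⟩
    · exact ⟨3, h⟩
  · rintro ⟨d, rfl⟩; exact stepv_unit d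

lemma stepv_injective : Function.Injective stepv := by decide


def pw (s : ℕ → Fin 4) (n : ℕ) : Fin 2 → ℤ := ∑ i ∈ Finset.range n, stepv (s i)

def ext {N : ℕ} (s : Fin N → Fin 4) : ℕ → Fin 4 := fun i => if h : i < N then s ⟨i, h⟩ else 0

/-- first return to 0 happens exactly at time `k` -/
def FR (k : ℕ) (s : ℕ → Fin 4) : Prop := pw s k = 0 ∧ ∀ m ∈ Ioo 0 k, pw s m ≠ 0

instance (k : ℕ) (s : ℕ → Fin 4) : Decidable (FR k s) := by
  unfold FR; infer_instance

def NoRet (n : ℕ) (s : ℕ → Fin 4) : Prop := ∀ m ∈ Icc 1 n, pw s m ≠ 0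

instance (n : ℕ) (s : ℕ → Fin 4) : Decidable (NoRet n s) := by
  unfold NoRet; infer_instance

def uC (n : ℕ) : ℕ := (univ.filter (fun s : Fin n → Fin 4 => pw (ext s) n = 0)).card
def fC (n : ℕ) : ℕ := (univ.filter (fun s : Fin n → Fin 4 => FR n (ext s))).card
def gC (n : ℕ) : ℕ := (univ.filter (fun s : Fin n → Fin 4 => NoRet n (ext s))).card

lemma uC_zero : uC 0 = 1 := by
  unfold uC
  rw [Finset.filter_true_of_mem, Finset.card_univ]
  · simp [Fintype.card_fun]
  · intro s _; simp [pw]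

lemma pw_congr {s t : ℕ → Fin 4} {n : ℕ} (h : ∀ i < n, s i = t i) :
    pw s n = pw t n := by
  unfold pw; exact Finset.sum_congr rfl fun i hi => by rw [h i (Finset.mem_range.1 hi)]

lemma pw_ext_top {N : ℕ} (s : Fin N → Fin 4) :
    pw (ext s) N = ∑ i : Fin N, stepv (s i) := by
  rw [pw, Finset.sum_range fun i => stepv (ext s i)]
  exact Finset.sum_congr rfl fun i _ => by simp [ext, i.isLt]

def splitEquiv (k m : ℕ) : (Fin (k + m) → Fin 4) ≃ (Fin k → Fin 4) × (Fin m → Fin 4) :=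
  (Equiv.arrowCongr finSumFinEquiv.symm (Equiv.refl _)).trans (Equiv.sumArrowEquivProdArrow _ _ _)

lemma splitEquiv_fst {k m : ℕ} (s : Fin (k + m) → Fin 4) (j : Fin k) :
    (splitEquiv k m s).1 j = s (Fin.castAdd m j) := by
  simp [splitEquiv, Equiv.sumArrowEquivProdArrow]

lemma splitEquiv_snd {k m : ℕ} (s : Fin (k + m) → Fin 4) (j : Fin m) :
    (splitEquiv k m s).2 j = s (Fin.natAdd k j) := by
  simp [splitEquiv, Equiv.sumArrowEquivProdArrow]

lemma pw_front {k m : ℕ} (s : Fin (k + m) → Fin 4) {j : ℕ} (hj : j ≤ k) :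
    pw (ext s) j = pw (ext (splitEquiv k m s).1) j := by
  refine pw_congr fun i hi => ?_
  have h1 : i < k := lt_of_lt_of_le hi hj
  have h2 : i < k + m := lt_of_lt_of_le h1 (Nat.le_add_right _ _)
  simp only [ext, dif_pos h1, dif_pos h2, splitEquiv_fst]
  congr 1

lemma pw_back {k m : ℕ} (s : Fin (k + m) → Fin 4) {j : ℕ} (hj : j ≤ m) :
    pw (ext s) (k + j) = pw (ext s) k + pw (ext (splitEquiv k m s).2) j := by
  unfold pw
  rw [Finset.sum_range_add]
  congr 1
  refine Finset.sum_congr rfl fun i hi => ?_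
  have h1 : i < m := lt_of_lt_of_le (Finset.mem_range.1 hi) hj
  have h2 : k + i < k + m := by omega
  simp only [ext, dif_pos h1, dif_pos h2, splitEquiv_snd]
  congr 1

lemma card_filter_prod {A B C : Type*} [Fintype A] [Fintype B] [Fintype C]
    [DecidableEq B] [DecidableEq C]
    (e : A ≃ B × C) (P : A → Prop) [DecidablePred P]
    (P1 : B → Prop) [DecidablePred P1] (P2 : C → Prop) [DecidablePred P2]
    (h : ∀ a, P a ↔ P1 (e a).1 ∧ P2 (e a).2) :
    (univ.filter P).card = (univ.filter P1).card * (univ.filter P2).card := by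
  have himg : (univ.filter P).image e = univ.filter (fun bc : B × C => P1 bc.1 ∧ P2 bc.2) := by
    ext bc
    simp only [Finset.mem_image, Finset.mem_filter, Finset.mem_univ, true_and]
    constructor
    · rintro ⟨a, ha, rfl⟩; exact (h a).1 ha
    · intro hbc; exact ⟨e.symm bc, by rw [h]; simpa using hbc, e.apply_symm_apply bc⟩
  calc (univ.filter P).card = ((univ.filter P).image e).card :=
        (Finset.card_image_of_injective _ e.injective).symm
    _ = (univ.filter (fun bc : B × C => P1 bc.1 ∧ P2 bc.2)).card := by rw [himg]
    _ = _ := by rw [← Finset.univ_product_univ, Finset.filter_product, Finset.card_product]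


lemma FR_iff_front (k m : ℕ) (s : Fin (k + m) → Fin 4) :
    FR k (ext s) ↔ FR k (ext (splitEquiv k m s).1) := by
  simp only [FR]
  constructor
  · rintro ⟨h1, h2⟩
    exact ⟨by rw [← pw_front s le_rfl]; exact h1,
      fun j hj => by rw [← pw_front s (mem_Ioo.1 hj).2.le]; exact h2 j hj⟩
  · rintro ⟨h1, h2⟩
    exact ⟨by rw [pw_front s le_rfl]; exact h1,
      fun j hj => by rw [pw_front s (mem_Ioo.1 hj).2.le]; exact h2 j hj⟩

lemma key_split (k m : ℕ) (Q : (Fin m → Fin 4) → Prop) [DecidablePred Q] :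
    (univ.filter (fun s : Fin (k + m) → Fin 4 =>
      FR k (ext s) ∧ Q (splitEquiv k m s).2)).card = fC k * (univ.filter Q).card := by
  rw [fC]
  exact card_filter_prod (splitEquiv k m) _ (fun b => FR k (ext b)) Q
    (fun s => and_congr_left' (FR_iff_front k m s))

lemma key_u (k m : ℕ) :
    (univ.filter (fun s : Fin (k + m) → Fin 4 =>
      pw (ext s) (k + m) = 0 ∧ FR k (ext s))).card = fC k * uC m := by
  rw [uC, ← key_split k m (fun t => pw (ext t) m = 0)]
  congr 1
  apply Finset.filter_congr
  intro s _
  have hb := pw_back s (le_refl m)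
  constructor
  · rintro ⟨h1, h2⟩
    refine ⟨h2, ?_⟩
    rw [h2.1, zero_add] at hb
    rw [← hb]; exact h1
  · rintro ⟨h2, h1⟩
    refine ⟨?_, h2⟩
    rw [h2.1, zero_add] at hb
    rw [hb]; exact h1

lemma key_any (k m : ℕ) :
    (univ.filter (fun s : Fin (k + m) → Fin 4 => FR k (ext s))).card = fC k * 4 ^ m := by
  have h := key_split k m (fun _ => True)
  simp only [Finset.filter_true, Finset.card_univ, Fintype.card_fun, Fintype.card_fin] at h
  rw [← h]
  congr 1
  apply Finset.filter_congr
  intro s _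
  simp

lemma pw_ne_zero_of_FR {k k' : ℕ} {s : ℕ → Fin 4} (h : FR k s) (h' : FR k' s) (hlt : k < k')
    (hk : 0 < k) : False :=
  h'.2 k (mem_Ioo.2 ⟨hk, hlt⟩) h.1

lemma uC_renewal (n : ℕ) (hn : 1 ≤ n) :
    uC n = ∑ k ∈ Icc 1 n, fC k * uC (n - k) := by
  classical
  rw [uC]
  have hpart : (univ.filter (fun s : Fin n → Fin 4 => pw (ext s) n = 0))
      = (Icc 1 n).biUnion (fun k => univ.filter
          (fun s : Fin n → Fin 4 => pw (ext s) n = 0 ∧ FR k (ext s))) := by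
    ext s
    simp only [mem_biUnion, mem_filter, mem_univ, true_and, mem_Icc]
    constructor
    · intro h0
      have hexP : ∃ k, 0 < k ∧ pw (ext s) k = 0 := ⟨n, hn, h0⟩
      refine ⟨Nat.find hexP, ⟨(Nat.find_spec hexP).1, Nat.find_min' hexP ⟨hn, h0⟩⟩, h0,
        (Nat.find_spec hexP).2, fun m hm hm0 => ?_⟩
      exact Nat.find_min hexP (mem_Ioo.1 hm).2 ⟨(mem_Ioo.1 hm).1, hm0⟩
    · rintro ⟨k, _, h0, _⟩; exact h0
  rw [hpart, Finset.card_biUnion]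
  · refine Finset.sum_congr rfl fun k hk => ?_
    obtain ⟨hk1, hk2⟩ := mem_Icc.1 hk
    obtain ⟨m, rfl⟩ : ∃ m, n = k + m := ⟨n - k, by omega⟩
    rw [Nat.add_sub_cancel_left]
    exact key_u k m
  · intro k hk k' hk' hne
    simp only [Finset.disjoint_left, mem_filter, mem_univ, true_and]
    rintro s ⟨_, hFR⟩ ⟨_, hFR'⟩
    rcases lt_or_gt_of_ne hne with h | h
    · exact pw_ne_zero_of_FR hFR hFR' h (mem_Icc.1 hk).1
    · exact pw_ne_zero_of_FR hFR' hFR h (mem_Icc.1 hk').1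

lemma total_split (n : ℕ) (hn : 1 ≤ n) :
    4 ^ n = (∑ k ∈ Icc 1 n, fC k * 4 ^ (n - k)) + gC n := by
  classical
  have hcard : (univ : Finset (Fin n → Fin 4)).card = 4 ^ n := by
    simp [Finset.card_univ, Fintype.card_fun]
  have h := Finset.card_filter_add_card_filter_not
    (s := (univ : Finset (Fin n → Fin 4)))
    (p := fun s => ∃ k ∈ Icc 1 n, pw (ext s) k = 0)
  rw [hcard] at h
  rw [← h]
  congr 1
  · have hpart : (univ.filter (fun s : Fin n → Fin 4 => ∃ k ∈ Icc 1 n, pw (ext s) k = 0))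
        = (Icc 1 n).biUnion (fun k => univ.filter
            (fun s : Fin n → Fin 4 => FR k (ext s))) := by
      ext s
      simp only [mem_biUnion, mem_filter, mem_univ, true_and, mem_Icc]
      constructor
      · rintro ⟨k0, hk0, h0⟩
        have hexP : ∃ k, 0 < k ∧ pw (ext s) k = 0 := ⟨k0, hk0.1, h0⟩
        refine ⟨Nat.find hexP, ⟨(Nat.find_spec hexP).1,
          le_trans (Nat.find_min' hexP ⟨hk0.1, h0⟩) hk0.2⟩,
          (Nat.find_spec hexP).2, fun m hm hm0 => ?_⟩
        exact Nat.find_min hexP (mem_Ioo.1 hm).2 ⟨(mem_Ioo.1 hm).1, hm0⟩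
      · rintro ⟨k, hk, h0, _⟩; exact ⟨k, hk, h0⟩
    rw [hpart, Finset.card_biUnion]
    · refine Finset.sum_congr rfl fun k hk => ?_
      obtain ⟨hk1, hk2⟩ := mem_Icc.1 hk
      obtain ⟨m, rfl⟩ : ∃ m, n = k + m := ⟨n - k, by omega⟩
      rw [Nat.add_sub_cancel_left]
      exact key_any k m
    · intro k hk k' hk' hne
      simp only [Finset.disjoint_left, mem_filter, mem_univ, true_and]
      intro s hFR hFR'
      rcases lt_or_gt_of_ne hne with h | h
      · exact pw_ne_zero_of_FR hFR hFR' h (mem_Icc.1 hk).1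
      · exact pw_ne_zero_of_FR hFR' hFR h (mem_Icc.1 hk').1
  · rw [gC]
    apply congrArg Finset.card
    ext s
    simp only [mem_filter, mem_univ, true_and]
    unfold NoRet
    push_neg
    rfl


def qmap : Fin 4 ≃ Bool × Bool where
  toFun := ![(true, true), (false, false), (true, false), (false, true)]
  invFun := fun bc => if bc.1 then (if bc.2 then 0 else 2) else (if bc.2 then 3 else 1)
  left_inv := by decide
  right_inv := by decide

def sgn (b : Bool) : ℤ := if b then 1 else -1

lemma stepv_plus : ∀ d : Fin 4, stepv d 0 + stepv d 1 = sgn (qmap d).1 := by decide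
lemma stepv_minus : ∀ d : Fin 4, stepv d 0 - stepv d 1 = sgn (qmap d).2 := by decide

lemma sgn_sum (n : ℕ) (σ : Fin n → Bool) :
    ∑ i, sgn (σ i) = 2 * ((univ.filter (fun i => σ i = true)).card : ℤ) - n := by
  have : ∀ i, sgn (σ i) = 2 * (if σ i = true then (1:ℤ) else 0) - 1 := by
    intro i; cases h : σ i <;> simp [sgn, h]
  rw [Finset.sum_congr rfl fun i _ => this i, Finset.sum_sub_distrib, ← Finset.mul_sum,
    Finset.sum_boole]
  simp [Finset.card_univ]

lemma card_balanced (m : ℕ) :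
    (univ.filter (fun σ : Fin (2*m) → Bool => ∑ i, sgn (σ i) = 0)).card = (2*m).choose m := by
  have h2 : (univ.filter (fun σ : Fin (2*m) → Bool => ∑ i, sgn (σ i) = 0))
      = univ.filter (fun σ : Fin (2*m) → Bool =>
          (univ.filter (fun i => σ i = true)).card = m) := by
    ext σ
    simp only [mem_filter, mem_univ, true_and, sgn_sum]
    constructor <;> intro h <;> omega
  rw [h2, show (2*m).choose m = ((univ : Finset (Fin (2*m))).card).choose m by simp,
    ← Finset.card_powersetCard m (univ : Finset (Fin (2*m)))]
  apply Finset.card_bij (fun σ _ => univ.filter (fun i => σ i = true))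
  · intro σ hσ
    simp only [Finset.mem_powersetCard]
    exact ⟨Finset.subset_univ _, (Finset.mem_filter.1 hσ).2⟩
  · intro σ hσ τ hτ h
    funext i
    have := Finset.ext_iff.1 h i
    simp only [mem_filter, mem_univ, true_and] at this
    cases hh : σ i <;> cases hh' : τ i <;> simp [hh, hh'] at this ⊢ <;> tauto
  · intro T hT
    refine ⟨fun i => i ∈ T, ?_, ?_⟩
    · simp only [mem_filter, mem_univ, true_and]
      rw [Finset.mem_powersetCard] at hT
      have hTT : filter (fun i => decide (i ∈ T) = true) univ = T := by ext i; simp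
      rw [hTT]
      exact hT.2
    · ext i; simp

def rotEquiv (n : ℕ) : (Fin n → Fin 4) ≃ (Fin n → Bool) × (Fin n → Bool) :=
  (Equiv.arrowCongr (Equiv.refl _) qmap).trans (Equiv.arrowProdEquivProdArrow _ _ _)

lemma rotEquiv_fst {n : ℕ} (s : Fin n → Fin 4) (i : Fin n) :
    (rotEquiv n s).1 i = (qmap (s i)).1 := rfl
lemma rotEquiv_snd {n : ℕ} (s : Fin n → Fin 4) (i : Fin n) :
    (rotEquiv n s).2 i = (qmap (s i)).2 := rfl

lemma uC_two_mul (m : ℕ) : uC (2 * m) = ((2 * m).choose m) ^ 2 := by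
  rw [uC, sq, ← card_balanced]
  apply card_filter_prod (rotEquiv (2 * m))
  intro s
  rw [pw_ext_top]
  have hv : ∀ j, (∑ i : Fin (2*m), stepv (s i)) j = ∑ i : Fin (2*m), stepv (s i) j := by
    intro j; rw [Finset.sum_apply]
  constructor
  · intro h
    constructor
    · have h0 := congrFun h 0
      have h1 := congrFun h 1
      rw [hv] at h0 h1
      simp only [Pi.zero_apply] at h0 h1
      have : ∑ i : Fin (2*m), sgn ((rotEquiv (2*m) s).1 i)
          = ∑ i : Fin (2*m), (stepv (s i) 0 + stepv (s i) 1) := by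
        refine Finset.sum_congr rfl fun i _ => ?_
        rw [rotEquiv_fst, ← stepv_plus]
      rw [this, Finset.sum_add_distrib, h0, h1, add_zero]
    · have h0 := congrFun h 0
      have h1 := congrFun h 1
      rw [hv] at h0 h1
      simp only [Pi.zero_apply] at h0 h1
      have : ∑ i : Fin (2*m), sgn ((rotEquiv (2*m) s).2 i)
          = ∑ i : Fin (2*m), (stepv (s i) 0 - stepv (s i) 1) := by
        refine Finset.sum_congr rfl fun i _ => ?_
        rw [rotEquiv_snd, ← stepv_minus]
      rw [this, Finset.sum_sub_distrib, h0, h1, sub_zero]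
  · rintro ⟨h1, h2⟩
    have e1 : ∑ i : Fin (2*m), (stepv (s i) 0 + stepv (s i) 1) = 0 := by
      rw [← h1]
      refine Finset.sum_congr rfl fun i _ => ?_
      rw [rotEquiv_fst, ← stepv_plus]
    have e2 : ∑ i : Fin (2*m), (stepv (s i) 0 - stepv (s i) 1) = 0 := by
      rw [← h2]
      refine Finset.sum_congr rfl fun i _ => ?_
      rw [rotEquiv_snd, ← stepv_minus]
    rw [Finset.sum_add_distrib] at e1
    rw [Finset.sum_sub_distrib] at e2
    funext j
    rw [hv]
    fin_cases j <;> simp <;> omega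


lemma central_sq_bound : ∀ m : ℕ, 1 ≤ m → 16 ^ m ≤ 4 * m * (Nat.centralBinom m) ^ 2 := by
  intro m hm
  induction m with
  | zero => omega
  | succ m ih =>
    rcases Nat.lt_or_ge 1 (m+1) with h | h
    · have hm1 : 1 ≤ m := by omega
      have IH := ih hm1
      have key := Nat.succ_mul_centralBinom_succ m
      have pos : 0 < (m+1)^2 := by positivity
      have h2 : (m+1)^2 * 16^(m+1) ≤ (m+1)^2 * (4*(m+1)*(Nat.centralBinom (m+1))^2) := by
        have e1 : (m+1)^2 * (4*(m+1)*(Nat.centralBinom (m+1))^2)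
            = 4*(m+1)*((m+1)*Nat.centralBinom (m+1))^2 := by ring
        rw [e1, key]
        calc (m+1)^2 * 16^(m+1) = 16*(m+1)^2*16^m := by ring
          _ ≤ 16*(m+1)^2*(4*m*(Nat.centralBinom m)^2) := Nat.mul_le_mul_left _ IH
          _ ≤ 4*(m+1)*(2*(2*m+1)*Nat.centralBinom m)^2 := by nlinarith [sq_nonneg (Nat.centralBinom m)]
      exact Nat.le_of_mul_le_mul_left h2 pos
    · have : m = 0 := by omega
      subst this
      simp [Nat.centralBinom]

noncomputable def ur (n : ℕ) : ℝ := (uC n : ℝ) / 4 ^ n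
noncomputable def fr (k : ℕ) : ℝ := (fC k : ℝ) / 4 ^ k
noncomputable def S (N : ℕ) : ℝ := ∑ n ∈ range (N+1), ur n
noncomputable def Phi (N : ℕ) : ℝ := ∑ k ∈ Icc 1 N, fr k

lemma ur_nonneg (n : ℕ) : 0 ≤ ur n := by unfold ur; positivity
lemma fr_nonneg (k : ℕ) : 0 ≤ fr k := by unfold fr; positivity
lemma ur_zero : ur 0 = 1 := by simp [ur, uC_zero]

lemma one_le_S (N : ℕ) : 1 ≤ S N := by
  have h := Finset.single_le_sum (f := ur) (fun i _ => ur_nonneg i)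
    (Finset.mem_range.2 (Nat.succ_pos N))
  rw [ur_zero] at h
  exact h

lemma S_pos (N : ℕ) : 0 < S N := lt_of_lt_of_le one_pos (one_le_S N)

lemma ur_renewal (n : ℕ) (hn : 1 ≤ n) : ur n = ∑ k ∈ Icc 1 n, fr k * ur (n - k) := by
  rw [ur, uC_renewal n hn]
  push_cast
  rw [Finset.sum_div]
  refine Finset.sum_congr rfl fun k hk => ?_
  obtain ⟨hk1, hk2⟩ := Finset.mem_Icc.1 hk
  have hp : (4:ℝ)^n = 4^k * 4^(n-k) := by
    rw [← pow_add]; congr 1; omega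
  rw [fr, ur, hp]
  field_simp

lemma gr_eq (N : ℕ) (hN : 1 ≤ N) : (gC N : ℝ) / 4 ^ N = 1 - Phi N := by
  have h := total_split N hN
  have hc : ((4:ℝ))^N = (∑ k ∈ Icc 1 N, (fC k : ℝ) * 4 ^ (N-k)) + gC N := by
    exact_mod_cast congrArg (Nat.cast : ℕ → ℝ) h
  have h4 : (0:ℝ) < 4^N := by positivity
  rw [Phi]
  have : ∑ k ∈ Icc 1 N, fr k = (∑ k ∈ Icc 1 N, (fC k : ℝ) * 4 ^ (N-k)) / 4^N := by
    rw [Finset.sum_div]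
    refine Finset.sum_congr rfl fun k hk => ?_
    obtain ⟨hk1, hk2⟩ := Finset.mem_Icc.1 hk
    have hp : (4:ℝ)^N = 4^k * 4^(N-k) := by
      rw [← pow_add]; congr 1; omega
    rw [fr, hp]
    field_simp
  rw [this]
  field_simp
  linarith [hc]

lemma sum_Icc_ur_le (k N : ℕ) (hk : 1 ≤ k) :
    ∑ n ∈ Icc k N, ur (n - k) ≤ S N := by
  rw [← Finset.Ico_add_one_right_eq_Icc, Finset.sum_Ico_eq_sum_range]
  have : ∀ i, ur (k + i - k) = ur i := fun i => by congr 1; omega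
  rw [Finset.sum_congr rfl fun i _ => this i]
  apply Finset.sum_le_sum_of_subset_of_nonneg
  · intro x hx
    simp only [Finset.mem_range] at hx ⊢
    omega
  · intro i _ _; exact ur_nonneg i

lemma S_le (N : ℕ) (hN : 1 ≤ N) : S N ≤ 1 + Phi N * S N := by
  have hS : S N = 1 + ∑ n ∈ Icc 1 N, ur n := by
    rw [S, Finset.sum_range_succ', ur_zero, ← Finset.Ico_add_one_right_eq_Icc,
      Finset.sum_Ico_eq_sum_range, Nat.add_sub_cancel]
    have e : ∑ i ∈ range N, ur (1 + i) = ∑ i ∈ range N, ur (i + 1) :=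
      Finset.sum_congr rfl fun i _ => by rw [add_comm]
    rw [e]
    exact add_comm _ 1
  have hmain : ∑ n ∈ Icc 1 N, ur n ≤ Phi N * S N := by
    have e1 : ∑ n ∈ Icc 1 N, ur n
        = ∑ n ∈ Icc 1 N, ∑ k ∈ Icc 1 N, (if k ≤ n then fr k * ur (n - k) else 0) := by
      refine Finset.sum_congr rfl fun n hn => ?_
      obtain ⟨hn1, hn2⟩ := Finset.mem_Icc.1 hn
      rw [ur_renewal n hn1,
        show Finset.Icc 1 n = (Finset.Icc 1 N).filter (· ≤ n) from by
          ext x; simp only [Finset.mem_Icc, Finset.mem_filter]; omega,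
        Finset.sum_filter]
    rw [e1, Finset.sum_comm, Phi, Finset.sum_mul]
    apply Finset.sum_le_sum
    intro k hk
    obtain ⟨hk1, hk2⟩ := Finset.mem_Icc.1 hk
    have e2 : ∑ n ∈ Icc 1 N, (if k ≤ n then fr k * ur (n - k) else 0)
        = fr k * ∑ n ∈ Icc k N, ur (n - k) := by
      rw [← Finset.sum_filter,
        show (Finset.Icc 1 N).filter (k ≤ ·) = Finset.Icc k N from by
          ext x; simp only [Finset.mem_Icc, Finset.mem_filter]; omega,
        Finset.mul_sum]
    rw [e2]
    exact mul_le_mul_of_nonneg_left (sum_Icc_ur_le k N hk1) (fr_nonneg k)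
  linarith [hmain, hS]

lemma gr_le (N : ℕ) (hN : 1 ≤ N) : (gC N : ℝ) / 4 ^ N ≤ (S N)⁻¹ := by
  rw [gr_eq N hN]
  have h1 := S_le N hN
  have h2 := S_pos N
  have h3 : (1 - Phi N) * S N ≤ 1 := by nlinarith
  rw [← one_div, le_div_iff₀ h2]
  exact h3

lemma ur_two_mul_ge (m : ℕ) (hm : 1 ≤ m) : 1 / (4 * m : ℝ) ≤ ur (2 * m) := by
  have h := central_sq_bound m hm
  have hc : uC (2 * m) = (Nat.centralBinom m) ^ 2 := by
    rw [uC_two_mul]; rfl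
  rw [ur, hc]
  have h16 : (4:ℝ) ^ (2*m) = 16 ^ m := by
    rw [pow_mul]; norm_num
  rw [h16]
  rw [div_le_div_iff₀ (by positivity) (by positivity)]
  have := (Nat.cast_le (α := ℝ)).2 h
  push_cast at this ⊢
  nlinarith [this]

lemma S_ge_harmonic (N : ℕ) :
    (1/4 : ℝ) * ∑ i ∈ range (N / 2), (1 / (i + 1) : ℝ) ≤ S N := by
  have step1 : ∑ m ∈ Icc 1 (N / 2), ur (2 * m) ≤ S N := by
    have himg := Finset.sum_image (s := Icc 1 (N / 2)) (f := ur) (g := fun m => 2 * m)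
      (fun x _ y _ h => by simp only at h; omega)
    rw [← himg]
    apply Finset.sum_le_sum_of_subset_of_nonneg
    · intro x hx
      simp only [Finset.mem_image, Finset.mem_Icc] at hx
      obtain ⟨m, ⟨h1, h2⟩, rfl⟩ := hx
      simp only [Finset.mem_range]
      omega
    · intro i _ _; exact ur_nonneg i
  refine le_trans ?_ step1
  have step2 : ∀ m ∈ Icc 1 (N / 2), (1/4 : ℝ) * (1 / m) ≤ ur (2 * m) := by
    intro m hm
    obtain ⟨h1, _⟩ := Finset.mem_Icc.1 hm
    have := ur_two_mul_ge m h1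
    rw [show (1/4 : ℝ) * (1 / m) = 1 / (4 * m) by ring]
    exact this
  calc (1/4 : ℝ) * ∑ i ∈ range (N / 2), (1 / (i + 1) : ℝ)
      = ∑ m ∈ Icc 1 (N / 2), (1/4 : ℝ) * (1 / m) := by
        rw [Finset.mul_sum, ← Finset.Ico_add_one_right_eq_Icc, Finset.sum_Ico_eq_sum_range,
          Nat.add_sub_cancel]
        refine Finset.sum_congr rfl fun i _ => ?_
        push_cast
        ring
    _ ≤ ∑ m ∈ Icc 1 (N / 2), ur (2 * m) := Finset.sum_le_sum step2

lemma tendsto_S : Filter.Tendsto S Filter.atTop Filter.atTop := by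
  apply Filter.tendsto_atTop_mono S_ge_harmonic
  apply Filter.Tendsto.const_mul_atTop (by norm_num : (0:ℝ) < 1/4)
  apply (Real.tendsto_sum_range_one_div_nat_succ_atTop).comp
  apply Filter.tendsto_atTop_atTop.2
  intro b
  exact ⟨2 * b, fun a ha => by omega⟩

lemma tendsto_gr : Filter.Tendsto (fun N => (gC N : ℝ) / 4 ^ N) Filter.atTop (nhds 0) := by
  apply squeeze_zero' (g := fun N => (S N)⁻¹)
  · exact Filter.Eventually.of_forall fun N => by positivity
  · filter_upwards [Filter.eventually_ge_atTop 1] with N hN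
    exact gr_le N hN
  · exact tendsto_S.inv_tendsto_atTop

end RW

open MeasureTheory ProbabilityTheory Finset Filter ENNReal in
/-- the simple symmetric random walk on ℤ² is recurrent. -/
theorem simple_walk_Z2_recurrent
    {Ω : Type*} [MeasurableSpace Ω] (μ : Measure Ω) [IsProbabilityMeasure μ]
    (X : ℕ → Ω → (Fin 2 → ℤ))
    (hmeas : ∀ i, Measurable (X i))
    (hindep : iIndepFun X μ)
    (hstep : ∀ i v, IsUnitStep v → μ {ω | X i ω = v} = 1 / 4)
    (Y : ℕ → Ω → (Fin 2 → ℤ))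
    (hY : ∀ n ω, Y n ω = ∑ i ∈ Finset.range n, X i ω) :
    μ {ω | ∃ n > 0, Y n ω = 0} = 1 := by
  classical
  set E : Set Ω := {ω | ∃ n > 0, Y n ω = 0} with hE
  have hYmeas : ∀ n, Measurable (Y n) := by
    intro n
    have h : Y n = fun ω => ∑ i ∈ Finset.range n, X i ω := funext fun ω => hY n ω
    rw [h]
    exact Finset.measurable_sum _ fun i _ => hmeas i
  have hEmeas : MeasurableSet E := by
    have h : E = ⋃ n : ℕ, ⋃ (_ : n > 0), Y n ⁻¹' {0} := by
      ext ω
      simp [hE, Set.mem_setOf_eq]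
    rw [h]
    exact MeasurableSet.iUnion fun n => MeasurableSet.iUnion fun _ =>
      hYmeas n (measurableSet_singleton 0)
  have hEc : Eᶜ = {ω | ∀ n, 0 < n → Y n ω ≠ 0} := by
    ext ω
    simp only [hE, Set.mem_compl_iff, Set.mem_setOf_eq, not_exists, gt_iff_lt]
    push_neg
    rfl
  have hsets : ∀ (i : ℕ) (v : Fin 2 → ℤ), MeasurableSet (X i ⁻¹' {v}) :=
    fun i v => hmeas i (measurableSet_singleton v)
  have hquarter : ∀ (i : ℕ) (d : Fin 4), μ (X i ⁻¹' {RW.stepv d}) = 1 / 4 := by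
    intro i d
    have h := hstep i _ (RW.stepv_unit d)
    convert h using 2
    rfl
  set A : ℕ → Set Ω := fun i => ⋃ d : Fin 4, X i ⁻¹' {RW.stepv d} with hA
  have hAmeas : ∀ i, MeasurableSet (A i) := fun i => MeasurableSet.iUnion fun d => hsets i _
  have hAone : ∀ i, μ (A i) = 1 := by
    intro i
    rw [hA]
    rw [measure_iUnion ?_ fun d => hsets i _]
    · rw [tsum_fintype]
      rw [Finset.sum_congr rfl fun d _ => hquarter i d]
      rw [Finset.sum_const, Finset.card_univ]
      simp only [Fintype.card_fin, nsmul_eq_mul]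
      rw [one_div]
      exact ENNReal.mul_inv_cancel (by norm_num) (by norm_num)
    · intro d d' hdd'
      rw [Function.onFun]
      apply Set.disjoint_left.2
      intro ω h1 h2
      rw [Set.mem_preimage, Set.mem_singleton_iff] at h1 h2
      exact hdd' (RW.stepv_injective (h1 ▸ h2 ▸ rfl))
  set G : Set Ω := ⋂ i, A i with hG
  have hGc : μ Gᶜ = 0 := by
    rw [hG, Set.compl_iInter]
    exact measure_iUnion_null fun i => (prob_compl_eq_zero_iff (hAmeas i)).2 (hAone i)
  have hcyl : ∀ (N : ℕ) (s : ℕ → Fin 4),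
      μ (⋂ i ∈ Finset.range N, X i ⁻¹' {RW.stepv (s i)}) = (1 / 4 : ℝ≥0∞) ^ N := by
    intro N s
    have h := hindep.measure_inter_preimage_eq_mul (S := Finset.range N)
      (sets := fun i => {RW.stepv (s i)}) (fun i _ => measurableSet_singleton _)
    rw [h, Finset.prod_congr rfl fun i _ => hquarter i (s i), Finset.prod_const,
      Finset.card_range]
  have hbound : ∀ N : ℕ, μ Eᶜ ≤ (RW.gC N : ℝ≥0∞) * (1 / 4) ^ N := by
    intro N
    set gSet := Finset.univ.filter (fun s : Fin N → Fin 4 => RW.NoRet N (RW.ext s)) with hgSet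
    have hsub : Eᶜ ∩ G ⊆ ⋃ s ∈ gSet,
        ⋂ i ∈ Finset.range N, X i ⁻¹' {RW.stepv (RW.ext s i)} := by
      rintro ω ⟨h1, h2⟩
      rw [hEc] at h1
      have hd : ∀ i : Fin N, ∃ d : Fin 4, X (i : ℕ) ω = RW.stepv d := by
        intro i
        have hm := Set.mem_iInter.1 h2 (i : ℕ)
        rw [hA] at hm
        obtain ⟨t, ⟨d, rfl⟩, ht⟩ := hm
        exact ⟨d, ht⟩
      choose s hs using hd
      have hext : ∀ (i : ℕ) (hi : i < N), X i ω = RW.stepv (RW.ext s i) := by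
        intro i hi
        rw [RW.ext]
        rw [dif_pos hi]
        exact hs ⟨i, hi⟩
      have hmem : s ∈ gSet := by
        rw [hgSet]
        simp only [Finset.mem_filter, Finset.mem_univ, true_and]
        intro m hm
        obtain ⟨hm1, hm2⟩ := Finset.mem_Icc.1 hm
        have hpw : RW.pw (RW.ext s) m = Y m ω := by
          rw [hY, RW.pw]
          refine Finset.sum_congr rfl fun i hi => ?_
          exact (hext i (lt_of_lt_of_le (Finset.mem_range.1 hi) hm2)).symm
        rw [hpw]
        exact h1 m hm1
      have hc : ω ∈ ⋂ i ∈ Finset.range N, X i ⁻¹' {RW.stepv (RW.ext s i)} := by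
        rw [Set.mem_iInter₂]
        intro i hi
        rw [Set.mem_preimage, Set.mem_singleton_iff]
        exact hext i (Finset.mem_range.1 hi)
      exact Set.mem_biUnion hmem hc
    have step1 : μ Eᶜ ≤ μ (Eᶜ ∩ G) := by
      have hsplit : Eᶜ ⊆ (Eᶜ ∩ G) ∪ Gᶜ := by
        intro ω h
        by_cases hg : ω ∈ G
        · exact Or.inl ⟨h, hg⟩
        · exact Or.inr hg
      calc μ Eᶜ ≤ μ ((Eᶜ ∩ G) ∪ Gᶜ) := measure_mono hsplit
        _ ≤ μ (Eᶜ ∩ G) + μ Gᶜ := measure_union_le _ _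
        _ = μ (Eᶜ ∩ G) := by rw [hGc, add_zero]
    calc μ Eᶜ ≤ μ (Eᶜ ∩ G) := step1
      _ ≤ μ (⋃ s ∈ gSet, ⋂ i ∈ Finset.range N, X i ⁻¹' {RW.stepv (RW.ext s i)}) :=
          measure_mono hsub
      _ ≤ ∑ s ∈ gSet, μ (⋂ i ∈ Finset.range N, X i ⁻¹' {RW.stepv (RW.ext s i)}) :=
          measure_biUnion_finset_le _ _
      _ = ∑ _s ∈ gSet, (1 / 4 : ℝ≥0∞) ^ N :=
          Finset.sum_congr rfl fun s _ => hcyl N (RW.ext s)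
      _ = (RW.gC N : ℝ≥0∞) * (1 / 4) ^ N := by
          rw [Finset.sum_const, nsmul_eq_mul, RW.gC, hgSet]
  have heq : ∀ N : ℕ, (RW.gC N : ℝ≥0∞) * (1 / 4) ^ N
      = ENNReal.ofReal ((RW.gC N : ℝ) / 4 ^ N) := by
    intro N
    rw [show (RW.gC N : ℝ) / 4 ^ N = (RW.gC N : ℝ) * ((4:ℝ) ^ N)⁻¹ from div_eq_mul_inv _ _,
      ENNReal.ofReal_mul (by positivity), ENNReal.ofReal_natCast]
    congr 1
    rw [ENNReal.ofReal_inv_of_pos (by positivity), ENNReal.ofReal_pow (by norm_num)]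
    rw [one_div, ENNReal.inv_pow]
    norm_num
  have hlim : Tendsto (fun N => (RW.gC N : ℝ≥0∞) * (1 / 4) ^ N) atTop (nhds 0) := by
    simp only [heq]
    simpa using ENNReal.tendsto_ofReal RW.tendsto_gr
  have h0 : μ Eᶜ = 0 :=
    le_antisymm (ge_of_tendsto' hlim hbound) (by simp)
  exact (prob_compl_eq_zero_iff hEmeas).1 h0
end

section
/- For a random walk Y_n on Z^k with i.i.d. steps, recurrence (P(∃ n > 0, Y_n = 0) = 1) is equivalent to divergence of the series ∑_{n=1}^∞ P(Y_n = 0). -/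
open MeasureTheory ProbabilityTheory

section aux
variable {k : ℕ} {Ω : Type*} [MeasurableSpace Ω] (μ : Measure Ω) [IsProbabilityMeasure μ]
  (X : ℕ → Ω → (Fin k → ℤ))

lemma aux_tuple_meas (hmeas : ∀ i, Measurable (X i)) (n j : ℕ) :
    Measurable (fun ω (i : Fin j) => X (n + (i : ℕ)) ω) :=
  measurable_pi_lambda _ fun _ => hmeas _

lemma aux_block_singleton (hindep : iIndepFun X μ)
    (hident : ∀ i j, IdentDistrib (X i) (X j) μ μ) (n j : ℕ) (v : Fin j → (Fin k → ℤ)) :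
    μ {ω | ∀ i : Fin j, X (n + (i : ℕ)) ω = v i}
      = ∏ i : Fin j, μ (X 0 ⁻¹' {v i}) := by
  classical
  set sets : ℕ → Set (Fin k → ℤ) := fun i => {w | ∀ h : i - n < j, w = v ⟨i - n, h⟩} with hsets
  have key := (iIndepFun_iff_measure_inter_preimage_eq_mul.1 hindep) (Finset.Ico n (n + j))
    (sets := sets) (fun i _ => MeasurableSet.of_discrete)
  have hset : {ω | ∀ i : Fin j, X (n + (i : ℕ)) ω = v i}
      = ⋂ i ∈ Finset.Ico n (n + j), X i ⁻¹' sets i := by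
    ext ω
    simp only [Set.mem_setOf_eq, Set.mem_iInter, Finset.mem_Ico, Set.mem_preimage, hsets]
    constructor
    · intro h i hi hlt
      have := h ⟨i - n, hlt⟩
      simpa [Nat.add_sub_cancel' hi.1] using this
    · intro h i
      have := h (n + (i : ℕ)) ⟨Nat.le_add_right _ _, by omega⟩ (by simpa using i.2)
      simpa using this
  rw [hset, key]
  rw [Finset.prod_Ico_eq_prod_range]
  simp only [Nat.add_sub_cancel_left]
  have hw : ∀ (w : ℕ → Fin k → ℤ), (∀ i : Fin j, w i = v i) →
      ∏ x ∈ Finset.range j, μ (X (n + x) ⁻¹' sets (n + x)) = ∏ i : Fin j, μ (X 0 ⁻¹' {v i}) := by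
    intro w hwv
    have h1 : (∏ i : Fin j, μ (X 0 ⁻¹' {v i})) = ∏ x ∈ Finset.range j, μ (X 0 ⁻¹' {w x}) := by
      rw [← Fin.prod_univ_eq_prod_range]
      exact Finset.prod_congr rfl fun i _ => by rw [hwv i]
    rw [h1]
    refine Finset.prod_congr rfl fun x hx => ?_
    have hx' : x < j := Finset.mem_range.1 hx
    have hsetx : sets (n + x) = {w x} := by
      ext u
      simp only [hsets, Set.mem_setOf_eq, Nat.add_sub_cancel_left, Set.mem_singleton_iff]
      constructor
      · intro h; rw [h hx', ← hwv ⟨x, hx'⟩]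
      · intro h _; rw [h, hwv ⟨x, hx'⟩]
    rw [hsetx]
    exact (hident (n + x) 0).measure_mem_eq MeasurableSet.of_discrete
  exact hw (fun x => if h : x < j then v ⟨x, h⟩ else 0) (fun i => by simp [i.2])

lemma aux_blockLaw (hmeas : ∀ i, Measurable (X i))
    (hindep : iIndepFun X μ)
    (hident : ∀ i j, IdentDistrib (X i) (X j) μ μ) (n j : ℕ) :
    Measure.map (fun ω (i : Fin j) => X (n + (i : ℕ)) ω) μ
      = Measure.map (fun ω (i : Fin j) => X (i : ℕ) ω) μ := by
  rw [MeasureTheory.Measure.ext_iff_singleton]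
  intro v
  rw [Measure.map_apply (aux_tuple_meas X hmeas n j) MeasurableSet.of_discrete,
    Measure.map_apply (by simpa using aux_tuple_meas X hmeas 0 j) MeasurableSet.of_discrete]
  have h1 : (fun ω (i : Fin j) => X (n + (i : ℕ)) ω) ⁻¹' {v}
      = {ω | ∀ i : Fin j, X (n + (i : ℕ)) ω = v i} := by
    ext ω; simp [funext_iff]
  have h2 : (fun ω (i : Fin j) => X (i : ℕ) ω) ⁻¹' {v}
      = {ω | ∀ i : Fin j, X (0 + (i : ℕ)) ω = v i} := by
    ext ω; simp [funext_iff]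
  rw [h1, h2, aux_block_singleton μ X hindep hident n j v,
    aux_block_singleton μ X hindep hident 0 j v]

def Sset {k : ℕ} (j : ℕ) : Set (Fin j → (Fin k → ℤ)) :=
  {v | ∀ m, ∀ hm : 0 < m, ∀ hmj : m ≤ j,
    (∑ i ∈ Finset.range m, v ⟨i % j, Nat.mod_lt _ (Nat.lt_of_lt_of_le hm hmj)⟩) ≠ 0}

lemma aux_preimage (n j : ℕ) :
    (fun ω (i : Fin j) => X (n + (i : ℕ)) ω) ⁻¹' (Sset j)
      = {ω | ∀ m, 0 < m → m ≤ j → (∑ i ∈ Finset.Ico n (n + m), X i ω) ≠ 0} := by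
  ext ω
  simp only [Set.mem_preimage, Sset, Set.mem_setOf_eq]
  refine forall_congr' fun m => forall_congr' fun hm => forall_congr' fun hmj => ?_
  have : (∑ i ∈ Finset.range m,
        X (n + (⟨i % j, Nat.mod_lt _ (Nat.lt_of_lt_of_le hm hmj)⟩ : Fin j) : ℕ) ω)
      = ∑ i ∈ Finset.Ico n (n + m), X i ω := by
    rw [Finset.sum_Ico_eq_sum_range]
    simp only [Nat.add_sub_cancel_left]
    refine Finset.sum_congr rfl fun i hi => ?_
    have : i % j = i := Nat.mod_eq_of_lt (by have := Finset.mem_range.1 hi; omega)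
    simp [this]
  rw [this]

lemma aux_qshift (hmeas : ∀ i, Measurable (X i))
    (hindep : iIndepFun X μ)
    (hident : ∀ i j, IdentDistrib (X i) (X j) μ μ) (n j : ℕ) :
    μ {ω | ∀ m, 0 < m → m ≤ j → (∑ i ∈ Finset.Ico n (n + m), X i ω) ≠ 0}
      = μ {ω | ∀ m, 0 < m → m ≤ j → (∑ i ∈ Finset.range m, X i ω) ≠ 0} := by
  rw [← aux_preimage X n j,
    ← Measure.map_apply (aux_tuple_meas X hmeas n j) MeasurableSet.of_discrete,
    aux_blockLaw μ X hmeas hindep hident n j,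
    Measure.map_apply (by simpa using aux_tuple_meas X hmeas 0 j) MeasurableSet.of_discrete]
  have := aux_preimage X 0 j
  simp only [zero_add, ← Finset.range_eq_Ico] at this
  rw [this]

lemma aux_key (hmeas : ∀ i, Measurable (X i))
    (hindep : iIndepFun X μ)
    (hident : ∀ i j, IdentDistrib (X i) (X j) μ μ) (n j : ℕ) :
    μ {ω | (∑ i ∈ Finset.range n, X i ω) = 0 ∧
        ∀ m, n < m → m ≤ n + j → (∑ i ∈ Finset.range m, X i ω) ≠ 0}
      = μ {ω | (∑ i ∈ Finset.range n, X i ω) = 0}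
        * μ {ω | ∀ m, 0 < m → m ≤ j → (∑ i ∈ Finset.range m, X i ω) ≠ 0} := by
  classical
  have hsplit : ∀ (m : ℕ) (ω : Ω), (∑ i ∈ Finset.range (n + m), X i ω)
      = (∑ i ∈ Finset.range n, X i ω) + ∑ i ∈ Finset.Ico n (n + m), X i ω := by
    intro m ω
    rw [Finset.range_eq_Ico, ← Finset.sum_Ico_consecutive _ (Nat.zero_le n) (Nat.le_add_right n m),
      ← Finset.range_eq_Ico]
  have hset : {ω | (∑ i ∈ Finset.range n, X i ω) = 0 ∧
        ∀ m, n < m → m ≤ n + j → (∑ i ∈ Finset.range m, X i ω) ≠ 0}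
      = {ω | (∑ i ∈ Finset.range n, X i ω) = 0} ∩
        {ω | ∀ m, 0 < m → m ≤ j → (∑ i ∈ Finset.Ico n (n + m), X i ω) ≠ 0} := by
    ext ω
    simp only [Set.mem_setOf_eq, Set.mem_inter_iff]
    constructor
    · rintro ⟨h0, h1⟩
      refine ⟨h0, fun m hm hmj hc => ?_⟩
      exact h1 (n + m) (by omega) (by omega) (by rw [hsplit m ω, h0, hc, add_zero])
    · rintro ⟨h0, h1⟩
      refine ⟨h0, fun m hm hmj hc => ?_⟩
      have hm' : n + (m - n) = m := by omega
      apply h1 (m - n) (by omega) (by omega)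
      have h2 := hsplit (m - n) ω
      rw [h0, zero_add] at h2
      rw [← h2, hm']
      exact hc
  rw [hset]
  -- independence
  set S : Finset ℕ := Finset.range n with hS
  set T : Finset ℕ := Finset.Ico n (n + j) with hT
  have hST : Disjoint S T := by
    simp only [hS, hT, Finset.disjoint_left, Finset.mem_range, Finset.mem_Ico]
    omega
  have hbase := hindep.indepFun_finset S T hST hmeas
  have hφ : Measurable (fun g : (↥S → (Fin k → ℤ)) => ∑ i, g i) := Measurable.of_discrete
  have hψ : Measurable (fun (g : ↥T → (Fin k → ℤ)) (i : Fin j) =>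
      g ⟨n + (i : ℕ), by have := i.2; simp only [hT, Finset.mem_Ico]; omega⟩) :=
    Measurable.of_discrete
  have hcomp := hbase.comp hφ hψ
  have he1 : (fun g : (↥S → (Fin k → ℤ)) => ∑ i, g i) ∘ (fun a (i : ↥S) => X (i : ℕ) a)
      = fun ω => ∑ i ∈ Finset.range n, X i ω := by
    funext ω
    simp only [Function.comp_apply]
    rw [Finset.sum_coe_sort S (fun i => X i ω)]
  have he2 : (fun (g : ↥T → (Fin k → ℤ)) (i : Fin j) =>
        g ⟨n + (i : ℕ), by have := i.2; simp only [hT, Finset.mem_Ico]; omega⟩)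
        ∘ (fun a (i : ↥T) => X (i : ℕ) a)
      = fun ω (i : Fin j) => X (n + (i : ℕ)) ω := rfl
  rw [he1, he2] at hcomp
  have hmul := hcomp.measure_inter_preimage_eq_mul (s := {(0 : Fin k → ℤ)}) (t := Sset j)
    MeasurableSet.of_discrete MeasurableSet.of_discrete
  rw [aux_preimage X n j] at hmul
  have hA : (fun ω => ∑ i ∈ Finset.range n, X i ω) ⁻¹' {0}
      = {ω | (∑ i ∈ Finset.range n, X i ω) = 0} := rfl
  rw [hA] at hmul
  rw [hmul, aux_qshift μ X hmeas hindep hident n j]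

lemma aux_sum_meas (hmeas : ∀ i, Measurable (X i)) (n : ℕ) :
    MeasurableSet {ω | (∑ i ∈ Finset.range n, X i ω) = 0} := by
  have h : (fun ω => ∑ i ∈ Finset.range n, X i ω)
      = (fun v : Fin n → (Fin k → ℤ) => ∑ i, v i) ∘ (fun ω (i : Fin n) => X (i : ℕ) ω) := by
    funext ω
    exact (Fin.sum_univ_eq_sum_range (fun i => X i ω) n).symm
  have hm : Measurable (fun ω => ∑ i ∈ Finset.range n, X i ω) := by
    rw [h]
    exact Measurable.of_discrete.comp (measurable_pi_lambda _ fun i => hmeas _)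
  exact hm (MeasurableSet.singleton 0)

lemma aux_B_meas (hmeas : ∀ i, Measurable (X i)) (j : ℕ) :
    MeasurableSet {ω | ∀ m, 0 < m → m ≤ j → (∑ i ∈ Finset.range m, X i ω) ≠ 0} := by
  have h : {ω | ∀ m, 0 < m → m ≤ j → (∑ i ∈ Finset.range m, X i ω) ≠ 0}
      = ⋂ m, ⋂ (_ : 0 < m), ⋂ (_ : m ≤ j), {ω | (∑ i ∈ Finset.range m, X i ω) = 0}ᶜ := by
    ext ω; simp [Set.mem_iInter]
  rw [h]
  exact MeasurableSet.iInter fun m => MeasurableSet.iInter fun _ =>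
    MeasurableSet.iInter fun _ => (aux_sum_meas X hmeas m).compl

lemma aux_partition (hmeas : ∀ i, Measurable (X i))
    (hindep : iIndepFun X μ)
    (hident : ∀ i j, IdentDistrib (X i) (X j) μ μ) (N : ℕ) :
    ∑ n ∈ Finset.range (N + 1),
      μ {ω | (∑ i ∈ Finset.range n, X i ω) = 0}
        * μ {ω | ∀ m, 0 < m → m ≤ N - n → (∑ i ∈ Finset.range m, X i ω) ≠ 0} = 1 := by
  classical
  set D : ℕ → Set Ω := fun n => {ω | (∑ i ∈ Finset.range n, X i ω) = 0 ∧
      ∀ m, n < m → m ≤ N → (∑ i ∈ Finset.range m, X i ω) ≠ 0} with hD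
  have hDmeas : ∀ n, MeasurableSet (D n) := by
    intro n
    have h : D n = {ω | (∑ i ∈ Finset.range n, X i ω) = 0} ∩
        ⋂ m, ⋂ (_ : n < m), ⋂ (_ : m ≤ N), {ω | (∑ i ∈ Finset.range m, X i ω) = 0}ᶜ := by
      ext ω; simp [hD, Set.mem_iInter]
    rw [h]
    exact (aux_sum_meas X hmeas n).inter (MeasurableSet.iInter fun m =>
      MeasurableSet.iInter fun _ => MeasurableSet.iInter fun _ => (aux_sum_meas X hmeas m).compl)
  have hdisj : Set.PairwiseDisjoint (↑(Finset.range (N + 1))) D := by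
    have key : ∀ a b, a < b → b ≤ N → Disjoint (D a) (D b) := fun a b hlt hbN =>
      Set.disjoint_left.2 fun ω hωa hωb => hωa.2 b hlt hbN hωb.1
    intro a ha b hb hab
    simp only [Finset.coe_range, Set.mem_Iio] at ha hb
    rcases lt_or_gt_of_ne hab with h | h
    · exact key a b h (by omega)
    · exact (key b a h (by omega)).symm
  have hcover : (⋃ n ∈ Finset.range (N + 1), D n) = Set.univ := by
    refine Set.eq_univ_of_forall fun ω => ?_
    set P : ℕ → Prop := fun n => (∑ i ∈ Finset.range n, X i ω) = 0 with hP
    have hP0 : P 0 := by simp [hP]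
    set n₀ := Nat.findGreatest P N with hn₀
    have hPn₀ : P n₀ := Nat.findGreatest_spec (Nat.zero_le N) hP0
    have hle : n₀ ≤ N := Nat.findGreatest_le N
    refine Set.mem_biUnion (Finset.mem_range.2 (Nat.lt_succ_of_le hle)) ?_
    exact ⟨hPn₀, fun m hm hmN hc => Nat.findGreatest_is_greatest (P := P) hm hmN hc⟩
  have hsum : ∑ n ∈ Finset.range (N + 1), μ (D n) = 1 := by
    rw [← measure_biUnion_finset hdisj fun n _ => hDmeas n, hcover, measure_univ]
  rw [← hsum]
  refine Finset.sum_congr rfl fun n hn => ?_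
  have hnN : n ≤ N := by have := Finset.mem_range.1 hn; omega
  have hkey := aux_key μ X hmeas hindep hident n (N - n)
  rw [Nat.add_sub_cancel' hnN] at hkey
  rw [← hkey]

end aux

set_option maxHeartbeats 2000000 in
open Filter Topology in
/-- for a random walk on ℤ^k with i.i.d. steps, recurrence is equivalent to
divergence of the series `∑_{n ≥ 1} P(Y_n = 0)`. -/
theorem recurrence_iff_sum_return_probs_diverges
    {k : ℕ}
    {Ω : Type*} [MeasurableSpace Ω] (μ : Measure Ω) [IsProbabilityMeasure μ]
    (X : ℕ → Ω → (Fin k → ℤ))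
    (hmeas : ∀ i, Measurable (X i))
    (hindep : iIndepFun X μ)
    (hident : ∀ i j, IdentDistrib (X i) (X j) μ μ)
    (Y : ℕ → Ω → (Fin k → ℤ))
    (hY : ∀ n ω, Y n ω = ∑ i ∈ Finset.range n, X i ω) :
    μ {ω | ∃ n > 0, Y n ω = 0} = 1 ↔
      ∑' n : ℕ, μ {ω | Y (n + 1) ω = 0} = ⊤ := by
  classical
  simp only [hY]
  -- abbreviations
  have hpart := aux_partition μ X hmeas hindep hident
  set r : ℕ → ENNReal := fun n => μ {ω | (∑ i ∈ Finset.range n, X i ω) = 0} with hrdef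
  set q : ℕ → ENNReal :=
    fun j => μ {ω | ∀ m, 0 < m → m ≤ j → (∑ i ∈ Finset.range m, X i ω) ≠ 0} with hqdef
  have hpart' : ∀ N, ∑ n ∈ Finset.range (N + 1), r n * q (N - n) = 1 := hpart
  set B : ℕ → Set Ω :=
    fun j => {ω | ∀ m, 0 < m → m ≤ j → (∑ i ∈ Finset.range m, X i ω) ≠ 0} with hBdef
  have hBmeas : ∀ j, MeasurableSet (B j) := fun j => aux_B_meas X hmeas j
  set Rset : Set Ω := {ω | ∃ n, 0 < n ∧ (∑ i ∈ Finset.range n, X i ω) = 0} with hRdef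
  have hRmeas : MeasurableSet Rset := by
    have h : Rset = ⋃ n, ⋃ (_ : 0 < n), {ω | (∑ i ∈ Finset.range n, X i ω) = 0} := by
      ext ω; simp [hRdef]
    rw [h]
    exact MeasurableSet.iUnion fun n => MeasurableSet.iUnion fun _ => aux_sum_meas X hmeas n
  have hcompl : Rsetᶜ = ⋂ j, B j := by
    ext ω
    simp only [hRdef, hBdef, Set.mem_compl_iff, Set.mem_setOf_eq, Set.mem_iInter, not_exists]
    constructor
    · intro h j m hm _ hc
      exact h m ⟨hm, hc⟩
    · rintro h m ⟨hm, hc⟩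
      exact h m m hm le_rfl hc
  have hBanti : Antitone B := by
    intro a b hab ω hω m hm hma
    exact hω m hm (le_trans hma hab)
  have hqanti : ∀ a b, a ≤ b → q b ≤ q a := fun a b h => measure_mono (hBanti h)
  have htend : Tendsto (fun j => q j) atTop (𝓝 (μ (⋂ j, B j))) :=
    tendsto_measure_iInter_atTop (fun j => (hBmeas j).nullMeasurableSet) hBanti
      ⟨0, measure_ne_top μ _⟩
  have hr0 : r 0 = 1 := by
    have : {ω : Ω | (∑ i ∈ Finset.range 0, X i ω) = 0} = Set.univ := by
      ext ω; simp
    simp only [hrdef, this, measure_univ]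
  constructor
  · intro hrec
    have hrec' : μ Rset = 1 := hrec
    by_contra htop
    have htop' : (∑' n, r (n + 1)) ≠ ⊤ := htop
    have hRc : μ Rsetᶜ = 0 := (prob_compl_eq_zero_iff hRmeas).2 hrec'
    rw [hcompl] at hRc
    rw [hRc] at htend
    set Stot := ∑' n, r n with hStot
    have hS1 : (1 : ENNReal) ≤ Stot := hr0 ▸ ENNReal.le_tsum 0
    have hSne : Stot ≠ ⊤ := by
      rw [hStot, tsum_eq_zero_add' ENNReal.summable]
      exact ENNReal.add_ne_top.2 ⟨by rw [hr0]; exact ENNReal.one_ne_top, htop'⟩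
    have hSne0 : Stot ≠ 0 := by
      intro h; rw [h] at hS1; exact absurd hS1 (by simp)
    have h2S : (0 : ENNReal) < (2 * Stot)⁻¹ :=
      ENNReal.inv_pos.2 (ENNReal.mul_ne_top (by norm_num) hSne)
    obtain ⟨M, hM⟩ : ∃ M, q M < (2 * Stot)⁻¹ := (htend.eventually_lt_const h2S).exists
    have htail : Tendsto (fun K => ∑' n, r (n + K)) atTop (𝓝 0) :=
      ENNReal.tendsto_sum_nat_add r hSne
    obtain ⟨K₀, hK₀⟩ : ∃ K₀, (∑' n, r (n + (K₀ + 1))) < 2⁻¹ := by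
      obtain ⟨K₁, hK₁⟩ := eventually_atTop.1
        (htail.eventually_lt_const (by norm_num : (0 : ENNReal) < 2⁻¹))
      exact ⟨K₁, hK₁ (K₁ + 1) (by omega)⟩
    set N := M + K₀ with hN
    have h1 := hpart' N
    have hsplit : ∑ n ∈ Finset.range (N + 1), r n * q (N - n)
        = (∑ n ∈ Finset.range (K₀ + 1), r n * q (N - n))
          + ∑ n ∈ Finset.Ico (K₀ + 1) (N + 1), r n * q (N - n) := by
      rw [Finset.range_eq_Ico, Finset.range_eq_Ico]
      exact (Finset.sum_Ico_consecutive (fun n => r n * q (N - n)) (m := 0) (n := K₀ + 1) (k := N + 1) (Nat.zero_le _) (by omega)).symm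
    have hP1 : (∑ n ∈ Finset.range (K₀ + 1), r n * q (N - n)) ≤ 2⁻¹ := by
      calc ∑ n ∈ Finset.range (K₀ + 1), r n * q (N - n)
          ≤ ∑ n ∈ Finset.range (K₀ + 1), r n * q M :=
            Finset.sum_le_sum fun n hn => mul_le_mul_right
              (hqanti M (N - n) (by have := Finset.mem_range.1 hn; omega)) _
        _ = (∑ n ∈ Finset.range (K₀ + 1), r n) * q M := (Finset.sum_mul _ _ _).symm
        _ ≤ Stot * q M := mul_le_mul_left (ENNReal.sum_le_tsum _) _
        _ ≤ Stot * (2 * Stot)⁻¹ := mul_le_mul_right hM.le _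
        _ = 2⁻¹ := by
            rw [ENNReal.mul_inv (Or.inl (by norm_num)) (Or.inl (by norm_num)),
              mul_comm ((2 : ENNReal)⁻¹) Stot⁻¹, ← mul_assoc,
              ENNReal.mul_inv_cancel hSne0 hSne, one_mul]
    have hP2 : (∑ n ∈ Finset.Ico (K₀ + 1) (N + 1), r n * q (N - n)) < 2⁻¹ := by
      calc ∑ n ∈ Finset.Ico (K₀ + 1) (N + 1), r n * q (N - n)
          ≤ ∑ n ∈ Finset.Ico (K₀ + 1) (N + 1), r n :=
            Finset.sum_le_sum fun n _ => by
              calc r n * q (N - n) ≤ r n * 1 := mul_le_mul_right prob_le_one _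
                _ = r n := mul_one _
        _ = ∑ i ∈ Finset.range (N + 1 - (K₀ + 1)), r ((K₀ + 1) + i) :=
            Finset.sum_Ico_eq_sum_range _ _ _
        _ = ∑ i ∈ Finset.range (N + 1 - (K₀ + 1)), r (i + (K₀ + 1)) := by
            exact Finset.sum_congr rfl fun i _ => by rw [add_comm]
        _ ≤ ∑' i, r (i + (K₀ + 1)) := ENNReal.sum_le_tsum _
        _ < 2⁻¹ := hK₀
    have hcontr : (1 : ENNReal) < 1 := by
      calc (1 : ENNReal) = ∑ n ∈ Finset.range (N + 1), r n * q (N - n) := h1.symm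
        _ = _ + _ := hsplit
        _ < 2⁻¹ + 2⁻¹ :=
            ENNReal.add_lt_add_of_le_of_lt (ne_top_of_le_ne_top (by norm_num) hP1) hP1 hP2
        _ = 1 := ENNReal.inv_two_add_inv_two
    exact absurd hcontr (lt_irrefl _)
  · intro htop
    have htop' : (∑' n, r (n + 1)) = ⊤ := htop
    show μ Rset = 1
    rw [← prob_compl_eq_zero_iff hRmeas]
    by_contra hne
    have hc : ∀ j, μ Rsetᶜ ≤ q j := fun j => by
      rw [hcompl]
      exact measure_mono (Set.iInter_subset _ j)
    have hbound : ∀ N, (∑ n ∈ Finset.range (N + 1), r n) * μ Rsetᶜ ≤ 1 := by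
      intro N
      rw [Finset.sum_mul, ← hpart' N]
      exact Finset.sum_le_sum fun n _ => mul_le_mul_right (hc (N - n)) _
    have hfin : (∑' n, r (n + 1)) ≤ (μ Rsetᶜ)⁻¹ := by
      rw [ENNReal.tsum_eq_iSup_sum]
      refine iSup_le fun s => ?_
      set b := s.sup id with hb
      calc ∑ n ∈ s, r (n + 1)
          ≤ ∑ n ∈ Finset.range (b + 1), r (n + 1) :=
            Finset.sum_le_sum_of_subset fun n hn =>
              Finset.mem_range.2 (by have := Finset.le_sup (f := id) hn; simp at this; omega)
        _ = ∑ m ∈ Finset.Ico 1 (b + 2), r m := by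
            rw [Finset.sum_Ico_eq_sum_range]
            have hb2 : b + 2 - 1 = b + 1 := by omega
            rw [hb2]
            exact Finset.sum_congr rfl fun i _ => by rw [add_comm]
        _ ≤ ∑ m ∈ Finset.range (b + 2), r m :=
            Finset.sum_le_sum_of_subset fun m hm => by
              simp only [Finset.mem_Ico] at hm
              exact Finset.mem_range.2 (by omega)
        _ ≤ (μ Rsetᶜ)⁻¹ := ENNReal.le_inv_iff_mul_le.2 (hbound (b + 1))
    rw [htop'] at hfin
    exact hne (ENNReal.inv_eq_top.1 (top_le_iff.1 hfin))
end

section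
/- For the simple symmetric random walk on Z^3, for every x ∈ Z^3 and every n, P(Y_n = x) ≤ 6^3 · (P(Y_n = 0) + P(Y_{n+1} = 0) + P(Y_{n+2} = 0) + P(Y_{n+3} = 0)). -/
open MeasureTheory ProbabilityTheory
open scoped ENNReal

namespace SWalk3

abbrev V3 := Fin 3 → ℤ
abbrev P6 := Fin 3 × Bool

def stp (p : P6) : V3 := if p.2 then Pi.single p.1 1 else -Pi.single p.1 1

lemma stp_apply (p : P6) (i : Fin 3) :
    stp p i = if i = p.1 then (if p.2 then 1 else -1) else 0 := by
  rcases p with ⟨a, b⟩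
  cases b <;> simp [stp, Pi.single_apply] <;> split <;> simp

lemma stp_injective : Function.Injective stp := by
  rintro ⟨a, b⟩ ⟨a', b'⟩ h
  have h1 := congrFun h a
  have h2 := congrFun h a'
  simp only [stp_apply] at h1 h2
  by_cases hb : b <;> by_cases hb' : b' <;> by_cases haa : a = a' <;>
    simp [haa, hb, hb'] at h1 h2 ⊢ <;> omega

def cnt (n : ℕ) (x : V3) : ℕ :=
  (Finset.univ.filter (fun g : Fin n → P6 => ∑ i, stp (g i) = x)).card

lemma cnt_zero (x : V3) : cnt 0 x = if x = 0 then 1 else 0 := by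
  classical
  rcases eq_or_ne x 0 with h | h
  · subst h
    simp [cnt, Finset.filter_true_of_mem]
  · rw [cnt, if_neg h, Finset.card_eq_zero, Finset.filter_eq_empty_iff]
    intro g _
    simpa using h.symm

lemma cnt_succ (n : ℕ) (x : V3) : cnt (n+1) x = ∑ p : P6, cnt n (x - stp p) := by
  classical
  rw [cnt, Finset.card_eq_sum_card_fiberwise (f := fun g : Fin (n+1) → P6 => g 0)
      (t := Finset.univ) (fun _ _ => Finset.mem_univ _)]
  refine Finset.sum_congr rfl (fun p _ => ?_)
  rw [cnt]
  refine Finset.card_bij' (fun g _ => fun i : Fin n => g i.succ)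
    (fun g _ => Fin.cons p g) ?_ ?_ ?_ ?_
  · intro g hg
    simp only [Finset.mem_filter, Finset.mem_univ, true_and] at hg ⊢
    obtain ⟨h1, h2⟩ := hg
    rw [Fin.sum_univ_succ, h2] at h1
    exact eq_sub_of_add_eq' h1
  · intro g hg
    simp only [Finset.mem_filter, Finset.mem_univ, true_and] at hg ⊢
    constructor
    · rw [Fin.sum_univ_succ]
      simp only [Fin.cons_zero, Fin.cons_succ, hg]
      abel
    · simp
  · intro g hg
    funext i
    induction i using Fin.cases with
    | zero =>
      simp only [Finset.mem_filter] at hg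
      simp [hg.2]
    | succ i => simp
  · intro g hg
    funext i
    simp

def setC (j : Fin 3) (t : ℤ) (x : V3) : V3 := fun i => if i = j then t else x i

lemma setC_apply_same (j : Fin 3) (t : ℤ) (x : V3) : setC j t x j = t := by simp [setC]

lemma setC_setC (j : Fin 3) (s t : ℤ) (x : V3) : setC j s (setC j t x) = setC j s x := by
  funext i; simp [setC]; split <;> simp

lemma setC_self (j : Fin 3) (x : V3) : setC j (x j) x = x := by
  funext i
  by_cases h : i = j
  · subst h; simp [setC]
  · simp [setC, h]

lemma sub_stp_ne (j : Fin 3) (t : ℤ) (x : V3) (a : Fin 3) (b : Bool) (h : a ≠ j) :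
    setC j t x - stp (a, b) = setC j t (x - stp (a, b)) := by
  funext i
  simp only [Pi.sub_apply, setC, stp_apply]
  split <;> simp_all [Ne.symm h]

lemma apply_sub_stp_ne (x : V3) (a : Fin 3) (b : Bool) (j : Fin 3) (h : a ≠ j) :
    (x - stp (a, b)) j = x j := by
  simp [stp_apply, Ne.symm h]

lemma sub_stp_true (j : Fin 3) (x : V3) : x - stp (j, true) = setC j (x j - 1) x := by
  funext i
  simp only [Pi.sub_apply, setC, stp_apply]
  split <;> simp_all

lemma sub_stp_false (j : Fin 3) (x : V3) : x - stp (j, false) = setC j (x j + 1) x := by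
  funext i
  simp only [Pi.sub_apply, setC, stp_apply]
  split <;> simp_all <;> ring

end SWalk3

namespace SWalk3

lemma setC_apply_ne (j : Fin 3) (t : ℤ) (x : V3) (i : Fin 3) (h : i ≠ j) :
    setC j t x i = x i := by simp [setC, h]

lemma pair_ineq (c : ℤ → ℕ) (hm : ∀ s t : ℤ, |t| ≤ |s| → (2:ℤ) ∣ s - t → c s ≤ c t)
    (a t : ℤ) (h1 : |t| ≤ |a|) (h2 : (2:ℤ) ∣ a - t) :
    c (a-1) + c (a+1) ≤ c (t-1) + c (t+1) := by
  have hsym : ∀ s : ℤ, c (-s) = c s := fun s =>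
    le_antisymm (hm (-s) s (by simp) ⟨-s, by ring⟩) (hm s (-s) (by simp) ⟨s, by ring⟩)
  have aux : ∀ a t : ℤ, 0 ≤ t → t ≤ a → (2:ℤ) ∣ a - t →
      c (a-1) + c (a+1) ≤ c (t-1) + c (t+1) := by
    intro a t ht hta h2
    by_cases hat : a = t
    · subst hat; exact le_rfl
    rcases eq_or_lt_of_le ht with h0 | h0
    · -- t = 0
      have ha2 : 2 ≤ a := by omega
      have e1 : c (a-1) ≤ c 1 :=
        hm _ _ (by rw [abs_of_nonneg (by omega : (0:ℤ) ≤ a - 1), abs_one]; omega) (by omega)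
      have e2 : c (a+1) ≤ c 1 :=
        hm _ _ (by rw [abs_of_nonneg (by omega : (0:ℤ) ≤ a + 1), abs_one]; omega) (by omega)
      have e3 : c (t-1) = c 1 := by
        rw [show t - 1 = -1 by omega]; exact hsym 1
      have e4 : c (t+1) = c 1 := by rw [show t + 1 = (1:ℤ) by omega]
      omega
    · -- 0 < t
      have e1 : c (a-1) ≤ c (t-1) :=
        hm _ _ (by rw [abs_of_nonneg (by omega : (0:ℤ) ≤ a - 1),
          abs_of_nonneg (by omega : (0:ℤ) ≤ t - 1)]; omega) (by omega)
      have e2 : c (a+1) ≤ c (t+1) :=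
        hm _ _ (by rw [abs_of_nonneg (by omega : (0:ℤ) ≤ a + 1),
          abs_of_nonneg (by omega : (0:ℤ) ≤ t + 1)]; omega) (by omega)
      omega
  have ht1 := abs_le.mp h1
  rcases le_or_gt 0 a with ha | ha <;> rcases le_or_gt 0 t with htt | htt
  · rw [abs_of_nonneg ha] at ht1
    exact aux a t htt (by omega) h2
  · rw [abs_of_nonneg ha] at ht1
    have key := aux a (-t) (by omega) (by omega) (by omega)
    have r1 : c (-t-1) = c (t+1) := by rw [show -t-1 = -(t+1) by ring, hsym]
    have r2 : c (-t+1) = c (t-1) := by rw [show -t+1 = -(t-1) by ring, hsym]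
    omega
  · rw [abs_of_neg ha] at ht1
    have key := aux (-a) t htt (by omega) (by omega)
    have r1 : c (-a-1) = c (a+1) := by rw [show -a-1 = -(a+1) by ring, hsym]
    have r2 : c (-a+1) = c (a-1) := by rw [show -a+1 = -(a-1) by ring, hsym]
    omega
  · rw [abs_of_neg ha] at ht1
    have key := aux (-a) (-t) (by omega) (by omega) (by omega)
    have r1 : c (-a-1) = c (a+1) := by rw [show -a-1 = -(a+1) by ring, hsym]
    have r2 : c (-a+1) = c (a-1) := by rw [show -a+1 = -(a-1) by ring, hsym]
    have r3 : c (-t-1) = c (t+1) := by rw [show -t-1 = -(t+1) by ring, hsym]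
    have r4 : c (-t+1) = c (t-1) := by rw [show -t+1 = -(t-1) by ring, hsym]
    omega

lemma cnt_mono : ∀ (n : ℕ) (j : Fin 3) (x : V3) (t : ℤ), |t| ≤ |x j| → (2:ℤ) ∣ x j - t →
    cnt n x ≤ cnt n (setC j t x) := by
  intro n
  induction n with
  | zero =>
    intro j x t h1 h2
    rw [cnt_zero, cnt_zero]
    rcases eq_or_ne x 0 with hx | hx
    · subst hx
      have ht0 : t = 0 := by simpa using h1
      subst ht0
      rw [show setC j 0 (0:V3) = 0 from setC_self j 0]
    · rw [if_neg hx]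
      exact Nat.zero_le _
  | succ n ih =>
    intro j x t h1 h2
    rw [cnt_succ, cnt_succ, Fintype.sum_prod_type, Fintype.sum_prod_type]
    refine Finset.sum_le_sum (fun a _ => ?_)
    by_cases haj : a = j
    · subst haj
      rw [Fintype.sum_bool, Fintype.sum_bool]
      simp only [sub_stp_true, sub_stp_false, setC_apply_same, setC_setC]
      have hm : ∀ s s' : ℤ, |s'| ≤ |s| → (2:ℤ) ∣ s - s' →
          cnt n (setC a s x) ≤ cnt n (setC a s' x) := by
        intro s s' hs hd
        have h3 := ih a (setC a s x) s' (by rwa [setC_apply_same]) (by rwa [setC_apply_same])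
        rwa [setC_setC] at h3
      exact pair_ineq (fun s => cnt n (setC a s x)) hm (x a) t h1 h2
    · rw [Fintype.sum_bool, Fintype.sum_bool]
      refine add_le_add ?_ ?_ <;>
      · rw [sub_stp_ne _ _ _ _ _ haj]
        exact ih j _ t (by rwa [apply_sub_stp_ne _ _ _ _ haj])
          (by rwa [apply_sub_stp_ne _ _ _ _ haj])

lemma cnt_le_succ (n : ℕ) (x : V3) (p : P6) : cnt n (x - stp p) ≤ cnt (n+1) x := by
  rw [cnt_succ]
  exact Finset.single_le_sum (f := fun q : P6 => cnt n (x - stp q)) (fun _ _ => Nat.zero_le _) (Finset.mem_univ p)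

lemma red1 (n : ℕ) (j : Fin 3) (x : V3) :
    cnt n x ≤ cnt n (setC j (if (2:ℤ) ∣ x j then 0 else 1) x) := by
  by_cases h : (2:ℤ) ∣ x j
  · rw [if_pos h]
    exact cnt_mono n j x 0 (by simp) (by simpa using h)
  · rw [if_neg h]
    refine cnt_mono n j x 1 ?_ (by omega)
    have hx0 : x j ≠ 0 := by intro h0; omega
    calc |(1:ℤ)| = 1 := abs_one
    _ ≤ |x j| := Int.one_le_abs hx0

lemma zstep (n : ℕ) (y : V3) (j : Fin 3) (h : y j = 0 ∨ y j = 1) :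
    cnt n y ≤ cnt (n + (y j).toNat) (setC j 0 y) := by
  rcases h with h | h
  · rw [h]
    simp only [Int.toNat_zero, Nat.add_zero]
    rw [show setC j 0 y = y by rw [← h]; exact setC_self j y]
  · rw [h]
    have e : setC j 0 y - stp (j, false) = y := by
      rw [sub_stp_false, setC_apply_same, setC_setC, zero_add, ← h, setC_self]
    calc cnt n y = cnt n (setC j 0 y - stp (j, false)) := by rw [e]
    _ ≤ cnt (n+1) (setC j 0 y) := cnt_le_succ n _ _

end SWalk3

namespace SWalk3

lemma cnt_key (n : ℕ) (x : V3) : ∃ k ≤ 3, cnt n x ≤ cnt (n + k) 0 := by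
  classical
  set c0 : ℤ := if (2:ℤ) ∣ x 0 then 0 else 1 with hc0
  set c1 : ℤ := if (2:ℤ) ∣ x 1 then 0 else 1 with hc1
  set c2 : ℤ := if (2:ℤ) ∣ x 2 then 0 else 1 with hc2
  set x1 : V3 := setC 0 c0 x with hx1
  set x2 : V3 := setC 1 c1 x1 with hx2
  set R : V3 := setC 2 c2 x2 with hxR
  have e10 : x1 1 = x 1 := setC_apply_ne _ _ _ _ (by decide)
  have e20 : x2 2 = x 2 := by
    rw [hx2, setC_apply_ne _ _ _ _ (by decide), hx1, setC_apply_ne _ _ _ _ (by decide)]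
  have hA1 : cnt n x ≤ cnt n x1 := red1 n 0 x
  have hA2 : cnt n x1 ≤ cnt n x2 := by
    have h := red1 n 1 x1
    rwa [e10] at h
  have hA3 : cnt n x2 ≤ cnt n R := by
    have h := red1 n 2 x2
    rwa [e20] at h
  have hA : cnt n x ≤ cnt n R := hA1.trans (hA2.trans hA3)
  have hR0 : R 0 = 0 ∨ R 0 = 1 := by
    rw [hxR, setC_apply_ne _ _ _ _ (by decide), hx2, setC_apply_ne _ _ _ _ (by decide),
      hx1, setC_apply_same, hc0]
    split <;> simp
  have hR1 : R 1 = 0 ∨ R 1 = 1 := by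
    rw [hxR, setC_apply_ne _ _ _ _ (by decide), hx2, setC_apply_same, hc1]
    split <;> simp
  have hR2 : R 2 = 0 ∨ R 2 = 1 := by
    rw [hxR, setC_apply_same, hc2]
    split <;> simp
  set z1 : V3 := setC 0 0 R with hz1
  set z2 : V3 := setC 1 0 z1 with hz2
  have f1 : z1 1 = R 1 := setC_apply_ne _ _ _ _ (by decide)
  have f2 : z2 2 = R 2 := by
    rw [hz2, setC_apply_ne _ _ _ _ (by decide), hz1, setC_apply_ne _ _ _ _ (by decide)]
  have hB1 : cnt n R ≤ cnt (n + (R 0).toNat) z1 := zstep n R 0 hR0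
  have hB2 : cnt (n + (R 0).toNat) z1 ≤ cnt (n + (R 0).toNat + (R 1).toNat) z2 := by
    have h := zstep (n + (R 0).toNat) z1 1 (by rw [f1]; exact hR1)
    rwa [f1] at h
  have hB3 : cnt (n + (R 0).toNat + (R 1).toNat) z2 ≤
      cnt (n + (R 0).toNat + (R 1).toNat + (R 2).toNat) (setC 2 0 z2) := by
    have h := zstep (n + (R 0).toNat + (R 1).toNat) z2 2 (by rw [f2]; exact hR2)
    rwa [f2] at h
  have hz3 : setC 2 0 z2 = 0 := by
    funext i
    fin_cases i
    · show setC 2 0 z2 0 = (0:ℤ)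
      rw [setC_apply_ne _ _ _ _ (by decide), hz2, setC_apply_ne _ _ _ _ (by decide),
        hz1, setC_apply_same]
    · show setC 2 0 z2 1 = (0:ℤ)
      rw [setC_apply_ne _ _ _ _ (by decide), hz2, setC_apply_same]
    · show setC 2 0 z2 2 = (0:ℤ)
      rw [setC_apply_same]
  refine ⟨(R 0).toNat + (R 1).toNat + (R 2).toNat, ?_, ?_⟩
  · rcases hR0 with g0 | g0 <;> rcases hR1 with g1 | g1 <;> rcases hR2 with g2 | g2 <;>
      rw [g0, g1, g2] <;> simp
  · rw [← Nat.add_assoc, ← Nat.add_assoc]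
    exact hA.trans (hB1.trans (hB2.trans (by rwa [hz3] at hB3)))

end SWalk3


namespace SWalk3

lemma isUnitStep_stp (p : P6) : IsUnitStep (stp p) := by
  rcases p with ⟨a, b⟩
  exact ⟨a, by cases b <;> simp [stp]⟩

variable {Ω : Type*} [MeasurableSpace Ω] (μ : Measure Ω) [IsProbabilityMeasure μ]
  (X : ℕ → Ω → V3)

theorem measure_walk_eq
    (hmeas : ∀ i, Measurable (X i))
    (hindep : iIndepFun X μ)
    (hstep : ∀ i v, IsUnitStep v → μ {ω | X i ω = v} = 1 / 6)
    (Y : ℕ → Ω → V3)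
    (hY : ∀ n ω, Y n ω = ∑ i ∈ Finset.range n, X i ω)
    (n : ℕ) (x : V3) :
    μ {ω | Y n ω = x} = (cnt n x : ℝ≥0∞) * (1/6) ^ n := by
  classical
  have hXp : ∀ (i : ℕ) (p : P6), μ {ω | X i ω = stp p} = 1 / 6 :=
    fun i p => hstep i (stp p) (isUnitStep_stp p)
  have hMS : ∀ (i : ℕ) (v : V3), MeasurableSet {ω | X i ω = v} := by
    intro i v
    exact hmeas i (measurableSet_singleton v)
  -- each X i lands in the 6 unit steps a.s.
  set A : ℕ → Set Ω := fun i => ⋃ p : P6, {ω | X i ω = stp p} with hA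
  have hAmeas : ∀ i, MeasurableSet (A i) := fun i => MeasurableSet.iUnion (fun p => hMS i _)
  have hAone : ∀ i, μ (A i) = 1 := by
    intro i
    rw [hA]
    rw [measure_iUnion ?_ (fun p => hMS i _)]
    · rw [tsum_fintype]
      simp only [hXp]
      rw [Finset.sum_const]
      simp only [Finset.card_univ]
      rw [show Fintype.card P6 = 6 by rfl]
      rw [nsmul_eq_mul]
      norm_num
      rw [ENNReal.mul_inv_cancel (by norm_num) (by norm_num)]
    · intro p q hpq
      refine Set.disjoint_left.mpr (fun ω h1 h2 => hpq ?_)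
      have e1 : X i ω = stp p := h1
      have e2 : X i ω = stp q := h2
      exact stp_injective (e1.symm.trans e2)
  set N : Set Ω := ⋃ i : Fin n, (A i.1)ᶜ with hN
  have hNnull : μ N = 0 := by
    rw [hN, measure_iUnion_null_iff]
    intro i
    rw [measure_compl (hAmeas _) (measure_ne_top μ _), hAone, measure_univ, tsub_self]
  set Fg : Finset (Fin n → P6) :=
    Finset.univ.filter (fun g : Fin n → P6 => ∑ i, stp (g i) = x) with hFg
  set B : (Fin n → P6) → Set Ω := fun g => ⋂ i : Fin n, {ω | X i.1 ω = stp (g i)} with hB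
  have hBmeas : ∀ g, MeasurableSet (B g) := fun g => MeasurableSet.iInter (fun i => hMS _ _)
  have hsub : {ω | Y n ω = x} \ N ⊆ ⋃ g ∈ Fg, B g := by
    intro ω hω
    obtain ⟨h1, h2⟩ := hω
    have hmem : ∀ i : Fin n, ∃ p : P6, X i.1 ω = stp p := by
      intro i
      have : ω ∉ (A i.1)ᶜ := fun hc => h2 (Set.mem_iUnion.mpr ⟨i, hc⟩)
      have hA' : ω ∈ A i.1 := not_not.mp this
      rw [hA, Set.mem_iUnion] at hA'
      exact hA'
    choose g hg using hmem
    have hgF : g ∈ Fg := by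
      rw [hFg, Finset.mem_filter]
      refine ⟨Finset.mem_univ _, ?_⟩
      have hsum : Y n ω = ∑ i : Fin n, X i.1 ω := by
        rw [hY n ω, ← Fin.sum_univ_eq_sum_range (fun i => X i ω)]
      rw [← h1, hsum]
      exact Finset.sum_congr rfl (fun i _ => (hg i).symm)
    exact Set.mem_biUnion hgF (Set.mem_iInter.mpr hg)
  have hsup : ⋃ g ∈ Fg, B g ⊆ {ω | Y n ω = x} := by
    intro ω hω
    rw [Set.mem_iUnion₂] at hω
    obtain ⟨g, hgF, hgB⟩ := hω
    rw [hFg, Finset.mem_filter] at hgF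
    rw [Set.mem_iInter] at hgB
    show Y n ω = x
    rw [hY n ω, ← Fin.sum_univ_eq_sum_range (fun i => X i ω), ← hgF.2]
    exact Finset.sum_congr rfl (fun i _ => hgB i)
  have hkey : μ {ω | Y n ω = x} = μ (⋃ g ∈ Fg, B g) := by
    refine le_antisymm ?_ (measure_mono hsup)
    calc μ {ω | Y n ω = x} ≤ μ (({ω | Y n ω = x} \ N) ∪ N) :=
          measure_mono (Set.subset_diff_union _ _)
    _ ≤ μ ({ω | Y n ω = x} \ N) + μ N := measure_union_le _ _
    _ = μ ({ω | Y n ω = x} \ N) := by rw [hNnull, add_zero]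
    _ ≤ μ (⋃ g ∈ Fg, B g) := measure_mono hsub
  have hBval : ∀ g : Fin n → P6, μ (B g) = (1/6 : ℝ≥0∞) ^ n := by
    intro g
    set s : ℕ → Set Ω := fun i =>
      if h : i < n then {ω | X i ω = stp (g ⟨i, h⟩)} else Set.univ with hs
    have hBs : B g = ⋂ i ∈ Finset.range n, s i := by
      ext ω
      simp only [hB, Set.mem_iInter, Finset.mem_range, hs]
      constructor
      · intro h i hi
        rw [dif_pos hi]
        exact h ⟨i, hi⟩
      · intro h i
        have := h i.1 i.2
        rwa [dif_pos i.2] at this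
    have hprod := hindep.meas_biInter (S := Finset.range n) (s := s) ?_
    · rw [hBs, hprod]
      rw [Finset.prod_congr rfl (fun i hi => ?_), Finset.prod_const, Finset.card_range]
      rw [hs]
      simp only [dif_pos (Finset.mem_range.mp hi)]
      exact hXp i _
    · intro i hi
      rw [Finset.mem_range] at hi
      refine ⟨{stp (g ⟨i, hi⟩)}, measurableSet_singleton _, ?_⟩
      rw [hs]
      simp only [dif_pos hi]
      rfl
  have hdisj : (↑Fg : Set (Fin n → P6)).PairwiseDisjoint B := by
    intro g _ g' _ hne
    refine Set.disjoint_left.mpr (fun ω h1 h2 => hne ?_)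
    rw [Set.mem_iInter] at h1 h2
    funext i
    exact stp_injective ((h1 i).symm.trans (h2 i))
  rw [hkey, measure_biUnion_finset hdisj (fun g _ => hBmeas g)]
  rw [Finset.sum_congr rfl (fun g _ => hBval g), Finset.sum_const, nsmul_eq_mul]
  rfl


end SWalk3

open SWalk3 in
/-- for the simple symmetric random walk on ℤ³ and every `x` and `n`,
`P(Y_n = x) ≤ 6³ (P(Y_n = 0) + P(Y_{n+1} = 0) + P(Y_{n+2} = 0) + P(Y_{n+3} = 0))`. -/
theorem simple_walk_Z3_point_prob_le_return_probs
    {Ω : Type*} [MeasurableSpace Ω] (μ : Measure Ω) [IsProbabilityMeasure μ]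
    (X : ℕ → Ω → (Fin 3 → ℤ))
    (hmeas : ∀ i, Measurable (X i))
    (hindep : iIndepFun X μ)
    (hstep : ∀ i v, IsUnitStep v → μ {ω | X i ω = v} = 1 / 6)
    (Y : ℕ → Ω → (Fin 3 → ℤ))
    (hY : ∀ n ω, Y n ω = ∑ i ∈ Finset.range n, X i ω) :
    ∀ (x : Fin 3 → ℤ) (n : ℕ),
      μ {ω | Y n ω = x} ≤
        6 ^ 3 * (μ {ω | Y n ω = 0} + μ {ω | Y (n + 1) ω = 0}
          + μ {ω | Y (n + 2) ω = 0} + μ {ω | Y (n + 3) ω = 0}) := by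
  intro x n
  obtain ⟨k, hk3, hk⟩ := cnt_key n x
  have meq : ∀ (m : ℕ) (y : V3), μ {ω | Y m ω = y} = (cnt m y : ℝ≥0∞) * (1/6) ^ m :=
    fun m y => measure_walk_eq μ X hmeas hindep hstep Y hY m y
  set q : ℝ≥0∞ := 1/6 with hq
  have hq6 : q * 6 = 1 := by
    rw [hq, one_div]
    exact ENNReal.inv_mul_cancel (by norm_num) (by norm_num)
  have step1 : μ {ω | Y n ω = x} ≤ (cnt (n+k) 0 : ℝ≥0∞) * q ^ n := by
    rw [meq n x]
    exact mul_le_mul_left (Nat.cast_le.mpr hk) _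
  have step2 : (cnt (n+k) 0 : ℝ≥0∞) * q ^ n = μ {ω | Y (n+k) ω = 0} * 6 ^ k := by
    rw [meq (n+k) 0]
    have e : q ^ (n+k) * 6 ^ k = q ^ n := by
      rw [pow_add, mul_assoc, ← mul_pow, hq6, one_pow, mul_one]
    rw [mul_assoc, e]
  have step3 : μ {ω | Y (n+k) ω = 0} ≤ μ {ω | Y n ω = 0} + μ {ω | Y (n + 1) ω = 0}
      + μ {ω | Y (n + 2) ω = 0} + μ {ω | Y (n + 3) ω = 0} := by
    interval_cases k
    · rw [Nat.add_zero]
      exact le_trans (self_le_add_right _ _)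
        (le_trans (self_le_add_right _ _) (self_le_add_right _ _))
    · exact le_trans (self_le_add_left _ _)
        (le_trans (self_le_add_right _ _) (self_le_add_right _ _))
    · exact le_trans (self_le_add_left _ _) (self_le_add_right _ _)
    · exact self_le_add_left _ _
  have hpow : (6 : ℝ≥0∞) ^ k ≤ 6 ^ 3 := by
    gcongr
    · norm_num
  calc μ {ω | Y n ω = x} ≤ (cnt (n+k) 0 : ℝ≥0∞) * q ^ n := step1
  _ = μ {ω | Y (n+k) ω = 0} * 6 ^ k := step2
  _ ≤ (μ {ω | Y n ω = 0} + μ {ω | Y (n + 1) ω = 0}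
      + μ {ω | Y (n + 2) ω = 0} + μ {ω | Y (n + 3) ω = 0}) * 6 ^ 3 :=
    mul_le_mul' step3 hpow
  _ = _ := mul_comm _ _
end

section
/- Let Z_n be a random walk on Z^k whose step distribution is a mixture p·μ + q·ν, where p + q = 1, p, q > 0, μ is the step distribution of a walk X satisfying the uniform bound P(X_n = x) ≤ c/n^{3/2} for all x and n ≥ 1, and ν is any step distribution on Z^k. Then there exists a constant b > 0 such that P(Z_n = z) ≤ b / n^{3/2} for all z ∈ Z^k and all n ≥ 1. -/
open MeasureTheory ProbabilityTheory

open scoped ENNReal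

lemma tsum_prod_le_one_aux {V : Type} [Countable V] :
    ∀ (α : Type) [Fintype α], ∀ (F : Fintype α) (g : α → V → ℝ≥0∞),
      (∀ i, ∑' v, g i v ≤ 1) → ∑' f : α → V, ∏ i, g i (f i) ≤ 1 := by
  refine Fintype.induction_empty_option ?_ ?_ ?_
  · intro α β instβ e h F g hg
    have hF : F = instβ := Subsingleton.elim _ _
    subst hF
    haveI : Fintype α := Fintype.ofEquiv β e.symm
    have h' := h this (fun i => g (e i)) (fun i => hg (e i))
    have key : ∑' f : α → V, ∏ j : β, g j ((Equiv.arrowCongr e (Equiv.refl V)) f j)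
        = ∑' f : β → V, ∏ j, g j (f j) :=
      Equiv.tsum_eq (Equiv.arrowCongr e (Equiv.refl V)) (fun f => ∏ j, g j (f j))
    have hpt : ∀ f : α → V, ∏ j : β, g j ((Equiv.arrowCongr e (Equiv.refl V)) f j)
        = ∏ i : α, g (e i) (f i) := by
      intro f
      rw [← Equiv.prod_comp e (fun j => g j ((Equiv.arrowCongr e (Equiv.refl V)) f j))]
      exact Fintype.prod_congr _ _ fun i => by simp [Equiv.arrowCongr]
    rw [← key]
    calc ∑' f : α → V, ∏ j : β, g j ((Equiv.arrowCongr e (Equiv.refl V)) f j)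
        = ∑' f : α → V, ∏ i : α, g (e i) (f i) := tsum_congr hpt
      _ ≤ 1 := h'
  · intro F g hg
    rw [Subsingleton.elim F inferInstance]
    have h1 : ∀ f : PEmpty → V, ∏ i, g i (f i) = 1 := fun f => Fintype.prod_empty _
    calc ∑' f : PEmpty → V, ∏ i, g i (f i) = ∑' _f : PEmpty → V, (1:ℝ≥0∞) :=
          tsum_congr h1
      _ = 1 := tsum_eq_single (fun x => x.elim) (fun b hb => (hb (Subsingleton.elim b _)).elim)
      _ ≤ 1 := le_refl 1
  · intro α instα h F g hg
    have hF : F = instFintypeOption := Subsingleton.elim _ _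
    subst hF
    have key : ∑' y : V × (α → V), ∏ j : Option α,
          g j ((Equiv.piOptionEquivProd (β := fun _ => V)).symm y j)
        = ∑' f : Option α → V, ∏ j, g j (f j) :=
      Equiv.tsum_eq (Equiv.piOptionEquivProd (β := fun _ => V)).symm (fun f : Option α → V => ∏ j, g j (f j))
    rw [← key]
    have hval : ∀ (y : V × (α → V)), ∏ j : Option α,
          g j ((Equiv.piOptionEquivProd (β := fun _ => V)).symm y j)
        = g none y.1 * ∏ a : α, g (some a) (y.2 a) := by
      rintro ⟨v, f⟩
      rw [Fintype.prod_option]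
      simp [Equiv.piOptionEquivProd]
    calc ∑' y : V × (α → V), ∏ j : Option α,
          g j ((Equiv.piOptionEquivProd (β := fun _ => V)).symm y j)
        = ∑' y : V × (α → V), g none y.1 * ∏ a : α, g (some a) (y.2 a) := tsum_congr hval
      _ = ∑' (v : V) (f : α → V), g none v * ∏ a : α, g (some a) (f a) :=
          by exact ENNReal.tsum_prod'
      _ = (∑' v : V, g none v) * ∑' f : α → V, ∏ a : α, g (some a) (f a) := by
          rw [← ENNReal.tsum_mul_right]
          exact tsum_congr fun v => ENNReal.tsum_mul_left
      _ ≤ 1 * 1 :=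
          mul_le_mul' (hg none) (h inferInstance (fun a => g (some a)) (fun a => hg (some a)))
      _ = 1 := one_mul 1

lemma tsum_prod_le_one {V : Type} [Countable V] (ι : Type) [Fintype ι]
    (g : ι → V → ℝ≥0∞) (hg : ∀ i, ∑' v, g i v ≤ 1) :
    ∑' f : ι → V, ∏ i, g i (f i) ≤ 1 :=
  tsum_prod_le_one_aux ι inferInstance g hg

lemma walk_law {V : Type} [MeasurableSpace V] [MeasurableSingletonClass V] [Countable V]
    [AddCommMonoid V] {Ω : Type*} [MeasurableSpace Ω] (μ : Measure Ω)
    (fs : ℕ → Ω → V) (hmeas : ∀ i, Measurable (fs i))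
    (hindep : iIndepFun fs μ) (n : ℕ) (z : V) :
    μ {ω | ∑ i ∈ Finset.range n, fs i ω = z}
      = ∑' x : {x : Fin n → V // ∑ i, x i = z}, ∏ i : Fin n, μ.map (fs (i : ℕ)) {x.1 i} := by
  set A : {x : Fin n → V // ∑ i, x i = z} → Set Ω :=
    fun x => ⋂ i : Fin n, fs (i : ℕ) ⁻¹' {x.1 i} with hA
  have hset : {ω | ∑ i ∈ Finset.range n, fs i ω = z} = ⋃ x, A x := by
    ext ω
    simp only [Set.mem_setOf_eq, Set.mem_iUnion, hA, Set.mem_iInter, Set.mem_preimage,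
      Set.mem_singleton_iff]
    have hsr : ∑ i ∈ Finset.range n, fs i ω = ∑ i : Fin n, fs (i : ℕ) ω :=
      (Fin.sum_univ_eq_sum_range (fun i => fs i ω) n).symm
    constructor
    · intro hsum
      exact ⟨⟨fun i => fs (i : ℕ) ω, by rw [← hsr]; exact hsum⟩, fun i => rfl⟩
    · rintro ⟨⟨x, hx⟩, hω⟩
      rw [hsr, Fintype.sum_congr _ _ hω]
      exact hx
  have hAmeas : ∀ x, MeasurableSet (A x) := fun x =>
    MeasurableSet.iInter fun i => (hmeas i) (measurableSet_singleton _)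
  have hdisj : Pairwise (Function.onFun Disjoint A) := by
    intro x y hxy
    rw [Function.onFun, Set.disjoint_left]
    intro ω hx hy
    apply hxy
    ext i
    have h1 : fs (i : ℕ) ω = x.1 i := by
      simpa using Set.mem_iInter.mp hx i
    have h2 : fs (i : ℕ) ω = y.1 i := by
      simpa using Set.mem_iInter.mp hy i
    rw [← h1, h2]
  rw [hset, measure_iUnion hdisj hAmeas]
  refine tsum_congr fun x => ?_
  -- μ (A x) = ∏ i, μ.map (fs i) {x.1 i}
  classical
  set g : ℕ → Set Ω := fun i =>
    if h : i < n then fs i ⁻¹' {x.1 ⟨i, h⟩} else Set.univ with hg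
  have hAg : A x = ⋂ i ∈ Finset.range n, g i := by
    ext ω
    simp only [hA, Set.mem_iInter, Set.mem_preimage, Set.mem_singleton_iff, hg,
      Finset.mem_range]
    constructor
    · intro h i hi
      rw [dif_pos hi]
      exact h ⟨i, hi⟩
    · intro h i
      have := h (i : ℕ) i.2
      rwa [dif_pos i.2, Fin.eta] at this
  rw [hAg, hindep.meas_biInter (fun i hi => ?_)]
  · have : ∀ i : Fin n, μ (g (i : ℕ)) = μ.map (fs (i : ℕ)) {x.1 i} := by
      intro i
      rw [hg]
      simp only [dif_pos i.2, Fin.eta]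
      rw [Measure.map_apply (hmeas i) (measurableSet_singleton _)]
    rw [← Fin.prod_univ_eq_prod_range (fun i => μ (g i)) n]
    exact Fintype.prod_congr _ _ this
  · rw [Finset.mem_range] at hi
    refine ⟨{x.1 ⟨i, hi⟩}, measurableSet_singleton _, ?_⟩
    rw [hg]; simp only [dif_pos hi]

lemma TS_le {V : Type} [Countable V] [AddCommGroup V] [MeasurableSpace V]
    [MeasurableSingletonClass V]
    (μ₀ ν : Measure V) (hν : ∑' v : V, ν {v} ≤ 1) (B : ℕ → ℝ≥0∞)
    (hU : ∀ (m : ℕ) (w : V),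
      ∑' y : {y : Fin m → V // ∑ j, y j = w}, ∏ j, μ₀ {y.1 j} ≤ B m)
    (n : ℕ) (z : V) (S : Finset (Fin n)) :
    ∑' x : {x : Fin n → V // ∑ i, x i = z},
        (∏ i : {i : Fin n // i ∈ S}, μ₀ {x.1 i.1}) *
          ∏ i : {i : Fin n // i ∉ S}, ν {x.1 i.1}
      ≤ B S.card := by
  classical
  set m := S.card with hm
  have hUind : ∀ (w : V),
      ∑' a : {i : Fin n // i ∈ S} → V,
        Set.indicator {a : {i : Fin n // i ∈ S} → V | ∑ j, a j = w}
          (fun a => ∏ j, μ₀ {a j}) a ≤ B m := by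
    intro w
    have e : {i : Fin n // i ∈ S} ≃ Fin m :=
      Fintype.equivFinOfCardEq (by rw [Fintype.card_coe])
    set eA : (Fin m → V) ≃ ({i : Fin n // i ∈ S} → V) :=
      Equiv.arrowCongr e.symm (Equiv.refl V) with heA
    have key := Equiv.tsum_eq eA
      (fun a : {i : Fin n // i ∈ S} → V =>
        Set.indicator {a : {i : Fin n // i ∈ S} → V | ∑ j, a j = w}
          (fun a => ∏ j, μ₀ {a j}) a)
    rw [← key]
    have hv : ∀ (y : Fin m → V) (j : {i : Fin n // i ∈ S}), eA y j = y (e j) := by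
      intro y j
      simp [heA, Equiv.arrowCongr]
    have hpt : ∀ y : Fin m → V,
        Set.indicator {a : {i : Fin n // i ∈ S} → V | ∑ j, a j = w}
          (fun a => ∏ j, μ₀ {a j}) (eA y)
        = Set.indicator {y : Fin m → V | ∑ j, y j = w}
          (fun y => ∏ j, μ₀ {y j}) y := by
      intro y
      have hsum : ∑ j, eA y j = ∑ j, y j := by
        rw [Fintype.sum_congr _ _ (hv y)]
        exact Equiv.sum_comp e y
      have hprod : ∏ j, μ₀ {eA y j} = ∏ j, μ₀ {y j} := by
        rw [Fintype.prod_congr _ (fun j => μ₀ {y (e j)}) (fun j => by rw [hv])]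
        exact Equiv.prod_comp e (fun j => μ₀ {y j})
      simp only [Set.indicator_apply, Set.mem_setOf_eq, hsum, hprod]
    calc ∑' y : Fin m → V, Set.indicator _ (fun a => ∏ j, μ₀ {a j}) (eA y)
        = ∑' y : Fin m → V, Set.indicator {y : Fin m → V | ∑ j, y j = w}
            (fun y => ∏ j, μ₀ {y j}) y := tsum_congr hpt
      _ = ∑' y : {y : Fin m → V // ∑ j, y j = w}, ∏ j, μ₀ {y.1 j} :=
          (tsum_subtype {y : Fin m → V | ∑ j, y j = w} (fun y => ∏ j, μ₀ {y j})).symm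
      _ ≤ B m := hU m w
  set F : (Fin n → V) → ℝ≥0∞ := fun x =>
    Set.indicator {x : Fin n → V | ∑ i, x i = z}
      (fun x => (∏ i : {i : Fin n // i ∈ S}, μ₀ {x i.1}) *
        ∏ i : {i : Fin n // i ∉ S}, ν {x i.1}) x with hF
  set e := (Equiv.piEquivPiSubtypeProd (fun i : Fin n => i ∈ S) (fun _ => V)).symm with he
  have hpt : ∀ (ab : ({i : Fin n // i ∈ S} → V) × ({i : Fin n // ¬ i ∈ S} → V)),
      F (e ab) = Set.indicator
          {a : {i : Fin n // i ∈ S} → V | ∑ j, a j = z - ∑ j, ab.2 j}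
          (fun a => ∏ j, μ₀ {a j}) ab.1 * ∏ j, ν {ab.2 j} := by
    rintro ⟨a, b⟩
    have hvS : ∀ j : {i : Fin n // i ∈ S}, e (a, b) j.1 = a j := by
      rintro ⟨j, hj⟩
      simp [he, Equiv.piEquivPiSubtypeProd_symm_apply, dif_pos hj]
    have hvC : ∀ j : {i : Fin n // i ∉ S}, e (a, b) j.1 = b j := by
      rintro ⟨j, hj⟩
      simp [he, Equiv.piEquivPiSubtypeProd_symm_apply, dif_neg hj]
    have hsum : ∑ i, e (a, b) i = (∑ j, a j) + ∑ j, b j := by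
      rw [← Finset.sum_filter_add_sum_filter_not Finset.univ (· ∈ S) (e (a, b))]
      congr 1
      · exact (Finset.sum_subtype _ (fun x => by simp) (e (a, b))).trans
          (Fintype.sum_congr _ _ hvS)
      · exact (Finset.sum_subtype _ (fun x => by simp) (e (a, b))).trans
          (Fintype.sum_congr _ _ hvC)
    have hprodS : ∏ i : {i : Fin n // i ∈ S}, μ₀ {e (a, b) i.1} = ∏ j, μ₀ {a j} :=
      Fintype.prod_congr _ _ (fun j => by rw [hvS])
    have hprodC : ∏ i : {i : Fin n // i ∉ S}, ν {e (a, b) i.1} = ∏ j, ν {b j} :=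
      Fintype.prod_congr _ _ (fun j => by rw [hvC])
    simp only [hF, Set.indicator_apply, Set.mem_setOf_eq, hsum, hprodS, hprodC]
    by_cases hcond : (∑ j, a j) + ∑ j, b j = z
    · rw [if_pos hcond, if_pos (eq_sub_iff_add_eq.mpr hcond)]
    · rw [if_neg hcond, if_neg (fun h => hcond (eq_sub_iff_add_eq.mp h)), zero_mul]
  calc ∑' x : {x : Fin n → V // ∑ i, x i = z},
        (∏ i : {i : Fin n // i ∈ S}, μ₀ {x.1 i.1}) *
          ∏ i : {i : Fin n // i ∉ S}, ν {x.1 i.1}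
      = ∑' x : Fin n → V, F x := by
        rw [hF]
        exact tsum_subtype {x : Fin n → V | ∑ i, x i = z}
          (fun x => (∏ i : {i : Fin n // i ∈ S}, μ₀ {x i.1}) *
            ∏ i : {i : Fin n // i ∉ S}, ν {x i.1})
    _ = ∑' ab, F (e ab) := (Equiv.tsum_eq e F).symm
    _ = ∑' ab : ({i : Fin n // i ∈ S} → V) × ({i : Fin n // ¬ i ∈ S} → V),
          Set.indicator {a : {i : Fin n // i ∈ S} → V | ∑ j, a j = z - ∑ j, ab.2 j}
            (fun a => ∏ j, μ₀ {a j}) ab.1 * ∏ j, ν {ab.2 j} := tsum_congr hpt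
    _ = ∑' (b : {i : Fin n // i ∉ S} → V) (a : {i : Fin n // i ∈ S} → V),
          Set.indicator {a : {i : Fin n // i ∈ S} → V | ∑ j, a j = z - ∑ j, b j}
            (fun a => ∏ j, μ₀ {a j}) a * ∏ j, ν {b j} := by
        rw [ENNReal.tsum_prod']
        exact ENNReal.tsum_comm
    _ = ∑' b : {i : Fin n // i ∉ S} → V,
          (∑' a : {i : Fin n // i ∈ S} → V,
            Set.indicator {a : {i : Fin n // i ∈ S} → V | ∑ j, a j = z - ∑ j, b j}
              (fun a => ∏ j, μ₀ {a j}) a) * ∏ j, ν {b j} :=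
        tsum_congr fun b => ENNReal.tsum_mul_right
    _ ≤ ∑' b : {i : Fin n // i ∉ S} → V, B m * ∏ j, ν {b j} :=
        ENNReal.tsum_le_tsum fun b => mul_le_mul_left (hUind _) _
    _ = B m * ∑' b : {i : Fin n // i ∉ S} → V, ∏ j, ν {b j} := ENNReal.tsum_mul_left
    _ ≤ B m * 1 := mul_le_mul_right (tsum_prod_le_one _ (fun _ v => ν {v}) (fun _ => hν)) _
    _ = B S.card := by rw [mul_one, hm]

lemma sum_weights {α : Type*} [Fintype α] [DecidableEq α] (a b : ℝ≥0∞) :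
    ∑ S : Finset α, a ^ S.card * b ^ (Fintype.card α - S.card)
      = (a + b) ^ Fintype.card α := by
  calc ∑ S : Finset α, a ^ S.card * b ^ (Fintype.card α - S.card)
      = ∑ S ∈ (Finset.univ : Finset α).powerset,
          (∏ _i ∈ S, a) * ∏ _i ∈ Finset.univ \ S, b := by
        rw [Finset.powerset_univ]
        refine Finset.sum_congr rfl fun S _ => ?_
        rw [Finset.prod_const, Finset.prod_const, ← Finset.compl_eq_univ_sdiff,
          Finset.card_compl]
    _ = ∏ _i : α, (a + b) := (Finset.prod_add _ _ _).symm
    _ = (a + b) ^ Fintype.card α := by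
        rw [Finset.prod_const, Finset.card_univ]

lemma expansion {V : Type} [Countable V] [AddCommMonoid V] [MeasurableSpace V] [MeasurableSingletonClass V]
    (μ₀ ν : Measure V) (oP oQ : ℝ≥0∞) (n : ℕ) (z : V) (lam : ℕ → Measure V)
    (hlam : ∀ (i : ℕ) (v : V), lam i {v} = oP * μ₀ {v} + oQ * ν {v}) :
    ∑' x : {x : Fin n → V // ∑ i, x i = z}, ∏ i : Fin n, lam (i : ℕ) {x.1 i}
      = ∑ S : Finset (Fin n), (oP ^ S.card * oQ ^ (n - S.card)) *
          ∑' x : {x : Fin n → V // ∑ i, x i = z},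
            (∏ i : {i : Fin n // i ∈ S}, μ₀ {x.1 i.1}) *
              ∏ i : {i : Fin n // i ∉ S}, ν {x.1 i.1} := by
  classical
  have hx : ∀ x : {x : Fin n → V // ∑ i, x i = z},
      ∏ i : Fin n, lam (i : ℕ) {x.1 i}
        = ∑ S : Finset (Fin n), (oP ^ S.card * oQ ^ (n - S.card)) *
            ((∏ i : {i : Fin n // i ∈ S}, μ₀ {x.1 i.1}) *
              ∏ i : {i : Fin n // i ∉ S}, ν {x.1 i.1}) := by
    intro x
    calc ∏ i : Fin n, lam (i : ℕ) {x.1 i}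
        = ∏ i : Fin n, (oP * μ₀ {x.1 i} + oQ * ν {x.1 i}) :=
          Fintype.prod_congr _ _ fun i => hlam i _
      _ = ∑ S ∈ (Finset.univ : Finset (Fin n)).powerset,
            (∏ i ∈ S, oP * μ₀ {x.1 i}) * ∏ i ∈ Finset.univ \ S, oQ * ν {x.1 i} :=
          Finset.prod_add _ _ _
      _ = ∑ S : Finset (Fin n), (oP ^ S.card * oQ ^ (n - S.card)) *
            ((∏ i : {i : Fin n // i ∈ S}, μ₀ {x.1 i.1}) *
              ∏ i : {i : Fin n // i ∉ S}, ν {x.1 i.1}) := by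
          rw [Finset.powerset_univ]
          refine Finset.sum_congr rfl fun S _ => ?_
          rw [Finset.prod_mul_distrib, Finset.prod_mul_distrib,
            Finset.prod_const, Finset.prod_const, ← Finset.compl_eq_univ_sdiff,
            Finset.card_compl, Fintype.card_fin,
            Finset.prod_subtype S (fun i => Iff.rfl) (fun i => μ₀ {x.1 i}),
            Finset.prod_subtype Sᶜ (fun i => Finset.mem_compl) (fun i => ν {x.1 i})]
          ring
  rw [tsum_congr hx, Summable.tsum_finsetSum (fun S _ => ENNReal.summable)]
  exact Finset.sum_congr rfl fun S _ => ENNReal.tsum_mul_left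

-- exp (-t) ≤ 4 / t^2 for t > 0
lemma exp_neg_le (t : ℝ) (ht : 0 < t) : Real.exp (-t) ≤ 4 / t ^ 2 := by
  have h1 : (1 + t / 2) ^ 2 ≤ Real.exp (t / 2) ^ 2 := by
    have := Real.add_one_le_exp (t / 2)
    nlinarith [Real.exp_pos (t / 2)]
  have h2 : t ^ 2 / 4 ≤ Real.exp t := by
    have : Real.exp (t / 2) ^ 2 = Real.exp t := by
      rw [← Real.exp_nat_mul]
      ring
    nlinarith
  rw [Real.exp_neg, inv_eq_one_div, div_le_div_iff₀ (Real.exp_pos t) (by positivity)]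
  nlinarith

lemma rho_le (p q : ℝ) (hp : 0 < p) (hq : 0 < q) (hpq : p + q = 1) :
    Real.exp (p / 2) * (p * Real.exp (-1) + q)
      ≤ Real.exp (-(p * (1 / 2 - Real.exp (-1)))) := by
  have h1 : p * Real.exp (-1) + q ≤ Real.exp (p * Real.exp (-1) - p) := by
    have := Real.add_one_le_exp (p * Real.exp (-1) - p)
    nlinarith
  calc Real.exp (p / 2) * (p * Real.exp (-1) + q)
      ≤ Real.exp (p / 2) * Real.exp (p * Real.exp (-1) - p) := by
        exact mul_le_mul_of_nonneg_left h1 (Real.exp_pos _).le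
    _ = Real.exp (-(p * (1 / 2 - Real.exp (-1)))) := by
        rw [← Real.exp_add]
        ring_nf

lemma a_pos (p : ℝ) (hp : 0 < p) : 0 < p * (1 / 2 - Real.exp (-1)) := by
  have h2 : Real.exp (-1) < 1 / 2 := by
    rw [Real.exp_neg]
    rw [inv_lt_comm₀ (Real.exp_pos 1) (by norm_num)]
    have := Real.exp_one_gt_d9
    norm_num
    linarith
  have := sub_pos.mpr h2
  positivity

/-- a random walk whose step distribution is a mixture `p·μ₀ + q·ν`, with
`p, q > 0`, `p + q = 1`, and such that the walk with step distribution `μ₀` satisfies the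
uniform bound `P(X_n = x) ≤ c/n^{3/2}`, itself satisfies a uniform bound
`P(Z_n = z) ≤ b/n^{3/2}` for some constant `b > 0`. -/
theorem mixture_walk_uniform_decay
    {k : ℕ}
    {Ω : Type*} [MeasurableSpace Ω] (μ : Measure Ω) [IsProbabilityMeasure μ]
    (μ₀ ν : Measure (Fin k → ℤ)) [IsProbabilityMeasure μ₀] [IsProbabilityMeasure ν]
    (p q : ℝ) (hp : 0 < p) (hq : 0 < q) (hpq : p + q = 1)
    -- the pure walk with step law μ₀
    (XS : ℕ → Ω → (Fin k → ℤ))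
    (hXmeas : ∀ i, Measurable (XS i))
    (hXindep : iIndepFun XS μ)
    (hXlaw : ∀ i, Measure.map (XS i) μ = μ₀)
    (Xw : ℕ → Ω → (Fin k → ℤ))
    (hXw : ∀ n ω, Xw n ω = ∑ i ∈ Finset.range n, XS i ω)
    -- the mixture walk with step law p·μ₀ + q·ν
    (ZS : ℕ → Ω → (Fin k → ℤ))
    (hZmeas : ∀ i, Measurable (ZS i))
    (hZindep : iIndepFun ZS μ)
    (hZlaw : ∀ i, Measure.map (ZS i) μ = ENNReal.ofReal p • μ₀ + ENNReal.ofReal q • ν)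
    (Zw : ℕ → Ω → (Fin k → ℤ))
    (hZw : ∀ n ω, Zw n ω = ∑ i ∈ Finset.range n, ZS i ω)
    -- the uniform bound for the pure walk
    (c : ℝ) (hc : 0 < c)
    (hXbound : ∀ (x : Fin k → ℤ) (n : ℕ), 1 ≤ n →
      (μ {ω | Xw n ω = x}).toReal ≤ c / (n : ℝ) ^ ((3 : ℝ) / 2)) :
    ∃ b : ℝ, 0 < b ∧ ∀ (z : Fin k → ℤ) (n : ℕ), 1 ≤ n →
      (μ {ω | Zw n ω = z}).toReal ≤ b / (n : ℝ) ^ ((3 : ℝ) / 2) := by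
  classical
  set a : ℝ := p * (1 / 2 - Real.exp (-1)) with ha_def
  have ha : 0 < a := a_pos p hp
  have hp2 : (0:ℝ) < (p / 2) ^ ((3:ℝ)/2) := Real.rpow_pos_of_pos (by linarith) _
  refine ⟨c / (p / 2) ^ ((3:ℝ)/2) + 4 / a ^ 2, by positivity, ?_⟩
  intro z n hn
  have hn1 : (1:ℝ) ≤ (n:ℝ) := by exact_mod_cast hn
  have hnp : (0:ℝ) < (n:ℝ) ^ ((3:ℝ)/2) := Real.rpow_pos_of_pos (by linarith) _
  set oP : ℝ≥0∞ := ENNReal.ofReal p with hoP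
  set oQ : ℝ≥0∞ := ENNReal.ofReal q with hoQ
  have hone : oP + oQ = 1 := by
    rw [hoP, hoQ, ← ENNReal.ofReal_add hp.le hq.le, hpq, ENNReal.ofReal_one]
  -- the bound function B
  set B : ℕ → ℝ≥0∞ := fun m =>
    if 1 ≤ m then min (ENNReal.ofReal (c / (m:ℝ) ^ ((3:ℝ)/2))) 1 else 1 with hB
  have hBle1 : ∀ m, B m ≤ 1 := by
    intro m; rw [hB]; dsimp only; split
    · exact min_le_right _ _
    · exact le_refl _
  have hU : ∀ (m : ℕ) (w : Fin k → ℤ),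
      ∑' y : {y : Fin m → (Fin k → ℤ) // ∑ j, y j = w}, ∏ j, μ₀ {y.1 j} ≤ B m := by
    intro m w
    have hw := walk_law μ XS hXmeas hXindep m w
    simp only [hXlaw] at hw
    rw [← hw]
    have hsetX : {ω | ∑ i ∈ Finset.range m, XS i ω = w} = {ω | Xw m ω = w} := by
      ext ω; simp [hXw]
    rw [hsetX, hB]
    dsimp only
    split
    · refine le_min ?_ prob_le_one
      rw [← ENNReal.ofReal_toReal (measure_ne_top μ _)]
      exact ENNReal.ofReal_le_ofReal (hXbound w m ‹1 ≤ m›)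
    · exact prob_le_one
  have hν1 : ∑' v : Fin k → ℤ, ν {v} ≤ 1 := by
    have hd : Pairwise (Function.onFun Disjoint fun v : Fin k → ℤ =>
        ({v} : Set (Fin k → ℤ))) := fun _ _ hab => Set.disjoint_singleton.mpr hab
    have h1 : ∑' v : Fin k → ℤ, ν {v} = ν Set.univ := by
      rw [← Set.iUnion_of_singleton (Fin k → ℤ)]
      exact (measure_iUnion hd (fun _ => measurableSet_singleton _)).symm
    rw [h1]
    exact prob_le_one
  set T : Finset (Fin n) → ℝ≥0∞ := fun S =>
    ∑' x : {x : Fin n → (Fin k → ℤ) // ∑ i, x i = z},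
      (∏ i : {i : Fin n // i ∈ S}, μ₀ {x.1 i.1}) *
        ∏ i : {i : Fin n // i ∉ S}, ν {x.1 i.1} with hT
  have hlam : ∀ (i : ℕ) (v : Fin k → ℤ), (μ.map (ZS i)) {v}
      = oP * μ₀ {v} + oQ * ν {v} := by
    intro i v
    rw [hZlaw i]
    simp [Measure.add_apply, Measure.smul_apply, smul_eq_mul]
  have key : μ {ω | Zw n ω = z}
      = ∑ S : Finset (Fin n), (oP ^ S.card * oQ ^ (n - S.card)) * T S := by
    have hsetZ : {ω | Zw n ω = z} = {ω | ∑ i ∈ Finset.range n, ZS i ω = z} := by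
      ext ω; simp [hZw]
    rw [hsetZ, walk_law μ ZS hZmeas hZindep n z,
      expansion μ₀ ν oP oQ n z (fun i => μ.map (ZS i)) hlam]
  have hTB : ∀ S : Finset (Fin n), T S ≤ B S.card := fun S => TS_le μ₀ ν hν1 B hU n z S
  -- total weight sum
  have hw_total : ∑ S : Finset (Fin n), oP ^ S.card * oQ ^ (n - S.card) = 1 := by
    have h := sum_weights (α := Fin n) oP oQ
    rw [Fintype.card_fin] at h
    rw [h, hone, one_pow]
  -- the big-set bound
  set Cbig : ℝ := (c / (p / 2) ^ ((3:ℝ)/2)) / (n:ℝ) ^ ((3:ℝ)/2) with hCbig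
  set Csm : ℝ := (4 / a ^ 2) / (n:ℝ) ^ ((3:ℝ)/2) with hCsm
  have hbigB : ∀ S : Finset (Fin n), (n:ℝ) * p / 2 < S.card →
      B S.card ≤ ENNReal.ofReal Cbig := by
    intro S hS
    have hr : (0:ℝ) < (n:ℝ) * p / 2 := by positivity
    have hcard1 : 1 ≤ S.card := by
      rcases Nat.eq_zero_or_pos S.card with h0 | h1
      · exfalso
        rw [h0] at hS
        push_cast at hS
        linarith
      · exact h1
    rw [hB]
    dsimp only
    rw [if_pos hcard1]
    refine (min_le_left _ _).trans (ENNReal.ofReal_le_ofReal ?_)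
    have hcardpos : (0:ℝ) < (S.card:ℝ) := by positivity
    have hrpow : ((n:ℝ) * p / 2) ^ ((3:ℝ)/2) ≤ (S.card:ℝ) ^ ((3:ℝ)/2) :=
      Real.rpow_le_rpow hr.le hS.le (by norm_num)
    have hme : ((n:ℝ) * p / 2) ^ ((3:ℝ)/2)
        = (p / 2) ^ ((3:ℝ)/2) * (n:ℝ) ^ ((3:ℝ)/2) := by
      rw [← Real.mul_rpow (by linarith) (by linarith)]
      ring_nf
    calc c / (S.card:ℝ) ^ ((3:ℝ)/2)
        ≤ c / ((n:ℝ) * p / 2) ^ ((3:ℝ)/2) := by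
          apply div_le_div_of_nonneg_left hc.le (Real.rpow_pos_of_pos hr _) hrpow
      _ = Cbig := by
          rw [hme, hCbig, div_div]
  -- small-set weight bound
  set oE : ℝ≥0∞ := ENNReal.ofReal (Real.exp (p / 2)) with hoE
  set oPe : ℝ≥0∞ := ENNReal.ofReal (p * Real.exp (-1)) with hoPe
  have hsmallw : ∀ S : Finset (Fin n), ¬ ((n:ℝ) * p / 2 < S.card) →
      oP ^ S.card * oQ ^ (n - S.card) ≤ oE ^ n * (oPe ^ S.card * oQ ^ (n - S.card)) := by
    intro S hS
    push_neg at hS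
    have hreal : p ^ S.card ≤ Real.exp (p / 2) ^ n * (p * Real.exp (-1)) ^ S.card := by
      rw [← Real.exp_nat_mul, mul_pow, ← Real.exp_nat_mul]
      have hcomb : Real.exp (↑n * (p / 2)) * Real.exp (↑S.card * (-1))
          = Real.exp (↑n * (p / 2) - S.card) := by
        rw [← Real.exp_add]; ring_nf
      have hge : (1:ℝ) ≤ Real.exp (↑n * (p / 2) - S.card) :=
        Real.one_le_exp (by linarith)
      calc p ^ S.card = p ^ S.card * 1 := (mul_one _).symm
        _ ≤ p ^ S.card * Real.exp (↑n * (p / 2) - S.card) := by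
            exact mul_le_mul_of_nonneg_left hge (by positivity)
        _ = Real.exp (↑n * (p / 2)) * (p ^ S.card * Real.exp (↑S.card * (-1))) := by
            rw [← hcomb]; ring
    have hEP : oP ^ S.card ≤ oE ^ n * oPe ^ S.card := by
      rw [hoP, hoE, hoPe, ← ENNReal.ofReal_pow hp.le, ← ENNReal.ofReal_pow (Real.exp_pos _).le,
        ← ENNReal.ofReal_pow (by positivity), ← ENNReal.ofReal_mul (by positivity)]
      exact ENNReal.ofReal_le_ofReal hreal
    calc oP ^ S.card * oQ ^ (n - S.card)
        ≤ (oE ^ n * oPe ^ S.card) * oQ ^ (n - S.card) := mul_le_mul_left hEP _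
      _ = oE ^ n * (oPe ^ S.card * oQ ^ (n - S.card)) := by ring
  -- the tail estimate
  have htail : oE ^ n * (oPe + oQ) ^ n ≤ ENNReal.ofReal Csm := by
    have hrho0 : (0:ℝ) ≤ Real.exp (p / 2) * (p * Real.exp (-1) + q) := by positivity
    have h1 : oE ^ n * (oPe + oQ) ^ n
        = ENNReal.ofReal ((Real.exp (p / 2) * (p * Real.exp (-1) + q)) ^ n) := by
      rw [hoE, hoPe, hoQ, ← ENNReal.ofReal_add (by positivity) hq.le, ← mul_pow,
        ← ENNReal.ofReal_mul (Real.exp_pos _).le, ← ENNReal.ofReal_pow hrho0]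
    rw [h1]
    refine ENNReal.ofReal_le_ofReal ?_
    have h2 : (Real.exp (p / 2) * (p * Real.exp (-1) + q)) ^ n
        ≤ Real.exp (-a) ^ n := by
      refine pow_le_pow_left₀ hrho0 ?_ n
      rw [ha_def]
      exact rho_le p q hp hq hpq
    have h3 : Real.exp (-a) ^ n = Real.exp (-(a * n)) := by
      rw [← Real.exp_nat_mul]; ring_nf
    have h4 : Real.exp (-(a * n)) ≤ 4 / (a * n) ^ 2 :=
      exp_neg_le _ (by positivity)
    have h5 : 4 / (a * (n:ℝ)) ^ 2 = (4 / a ^ 2) / (n:ℝ) ^ (2:ℕ) := by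
      rw [mul_pow, div_div]
    have h6 : (n:ℝ) ^ ((3:ℝ)/2) ≤ (n:ℝ) ^ (2:ℕ) := by
      rw [← Real.rpow_natCast (n:ℝ) 2]
      exact Real.rpow_le_rpow_of_exponent_le hn1 (by norm_num)
    have h7 : (4 / a ^ 2) / (n:ℝ) ^ (2:ℕ) ≤ Csm := by
      rw [hCsm]
      exact div_le_div_of_nonneg_left (by positivity) hnp h6
    calc (Real.exp (p / 2) * (p * Real.exp (-1) + q)) ^ n
        ≤ Real.exp (-a) ^ n := h2
      _ = Real.exp (-(a * n)) := h3
      _ ≤ 4 / (a * n) ^ 2 := h4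
      _ = (4 / a ^ 2) / (n:ℝ) ^ (2:ℕ) := h5
      _ ≤ Csm := h7
  -- assemble
  have main : μ {ω | Zw n ω = z} ≤ ENNReal.ofReal Cbig + ENNReal.ofReal Csm := by
    rw [key]
    set pred : Finset (Fin n) → Prop := fun S => (n:ℝ) * p / 2 < S.card with hpred
    calc ∑ S : Finset (Fin n), (oP ^ S.card * oQ ^ (n - S.card)) * T S
        ≤ ∑ S : Finset (Fin n), (oP ^ S.card * oQ ^ (n - S.card)) * B S.card :=
          Finset.sum_le_sum fun S _ => mul_le_mul_right (hTB S) _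
      _ = (∑ S ∈ Finset.univ.filter pred, (oP ^ S.card * oQ ^ (n - S.card)) * B S.card)
          + ∑ S ∈ Finset.univ.filter (fun S => ¬ pred S),
              (oP ^ S.card * oQ ^ (n - S.card)) * B S.card :=
          (Finset.sum_filter_add_sum_filter_not _ _ _).symm
      _ ≤ ENNReal.ofReal Cbig + ENNReal.ofReal Csm := by
          gcongr
          · -- big part
            calc ∑ S ∈ Finset.univ.filter pred,
                  (oP ^ S.card * oQ ^ (n - S.card)) * B S.card
                ≤ ∑ S ∈ Finset.univ.filter pred,
                    (oP ^ S.card * oQ ^ (n - S.card)) * ENNReal.ofReal Cbig := by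
                  refine Finset.sum_le_sum fun S hS => ?_
                  rw [Finset.mem_filter] at hS
                  exact mul_le_mul_right (hbigB S hS.2) _
              _ = (∑ S ∈ Finset.univ.filter pred,
                    oP ^ S.card * oQ ^ (n - S.card)) * ENNReal.ofReal Cbig :=
                  (Finset.sum_mul _ _ _).symm
              _ ≤ 1 * ENNReal.ofReal Cbig := by
                  refine mul_le_mul_left ?_ _
                  rw [← hw_total]
                  exact Finset.sum_le_sum_of_subset (Finset.filter_subset _ _)
              _ = ENNReal.ofReal Cbig := one_mul _
          · -- small part
            calc ∑ S ∈ Finset.univ.filter (fun S => ¬ pred S),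
                  (oP ^ S.card * oQ ^ (n - S.card)) * B S.card
                ≤ ∑ S ∈ Finset.univ.filter (fun S => ¬ pred S),
                    oE ^ n * (oPe ^ S.card * oQ ^ (n - S.card)) := by
                  refine Finset.sum_le_sum fun S hS => ?_
                  rw [Finset.mem_filter] at hS
                  calc (oP ^ S.card * oQ ^ (n - S.card)) * B S.card
                      ≤ (oP ^ S.card * oQ ^ (n - S.card)) * 1 :=
                        mul_le_mul_right (hBle1 _) _
                    _ = oP ^ S.card * oQ ^ (n - S.card) := mul_one _
                    _ ≤ oE ^ n * (oPe ^ S.card * oQ ^ (n - S.card)) := hsmallw S hS.2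
              _ ≤ ∑ S : Finset (Fin n), oE ^ n * (oPe ^ S.card * oQ ^ (n - S.card)) :=
                  Finset.sum_le_sum_of_subset (Finset.filter_subset _ _)
              _ = oE ^ n * ∑ S : Finset (Fin n), oPe ^ S.card * oQ ^ (n - S.card) :=
                  (Finset.mul_sum _ _ _).symm
              _ = oE ^ n * (oPe + oQ) ^ n := by
                  have h := sum_weights (α := Fin n) oPe oQ
                  rw [Fintype.card_fin] at h
                  rw [h]
              _ ≤ ENNReal.ofReal Csm := htail
  have hsum : Cbig + Csm = (c / (p / 2) ^ ((3:ℝ)/2) + 4 / a ^ 2) / (n:ℝ) ^ ((3:ℝ)/2) := by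
    rw [hCbig, hCsm, ← add_div]
  refine ENNReal.toReal_le_of_le_ofReal (by positivity) ?_
  calc μ {ω | Zw n ω = z} ≤ ENNReal.ofReal Cbig + ENNReal.ofReal Csm := main
    _ = ENNReal.ofReal (Cbig + Csm) := by
        rw [ENNReal.ofReal_add (by positivity) (by positivity)]
    _ = ENNReal.ofReal ((c / (p / 2) ^ ((3:ℝ)/2) + 4 / a ^ 2) / (n:ℝ) ^ ((3:ℝ)/2)) := by
        rw [hsum]
end

section
/- Let Y_n be a random walk on Z^k with i.i.d. steps. If Y is recurrent (returns to 0 with probability 1), then for every positive integer m the subsampled walk Y^0_i = Y_{mi} is also recurrent. -/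
open MeasureTheory ProbabilityTheory
open scoped ENNReal NNReal

namespace SubsampledAux

variable {k : ℕ} {Ω : Type*} [MeasurableSpace Ω] {μ : Measure Ω} [IsProbabilityMeasure μ]
  {X : ℕ → Ω → (Fin k → ℤ)}

/-- The tuple of `M` consecutive steps starting at index `n`. -/
def tup (X : ℕ → Ω → (Fin k → ℤ)) (n M : ℕ) : Ω → (Fin M → (Fin k → ℤ)) :=
  fun ω i => X (n + i) ω

lemma tup_measurable (hmeas : ∀ i, Measurable (X i)) (n M : ℕ) :
    Measurable (tup X n M) :=
  measurable_pi_lambda _ fun i => hmeas (n + i)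

lemma tup_preimage_singleton (n M : ℕ) (v : Fin M → (Fin k → ℤ)) :
    tup X n M ⁻¹' {v} =
      ⋂ j ∈ (Finset.range M).image (n + ·),
        X j ⁻¹' {if h : j - n < M then v ⟨j - n, h⟩ else 0} := by
  ext ω
  simp only [tup, Set.mem_preimage, Set.mem_singleton_iff, funext_iff, Set.mem_iInter,
    Finset.mem_image, Finset.mem_range]
  constructor
  · rintro h j ⟨i, hi, rfl⟩
    have h2 : n + i - n = i := by omega
    simp only [h2, hi, dif_pos]
    exact h ⟨i, hi⟩
  · intro h i
    have h1 := h (n + i.1) ⟨i.1, i.2, rfl⟩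
    have h2 : n + i.1 - n = i.1 := by omega
    simp only [h2, i.2, dif_pos] at h1
    simpa using h1

lemma meas_tup_singleton (hmeas : ∀ i, Measurable (X i))
    (hindep : iIndepFun X μ)
    (hident : ∀ i j, IdentDistrib (X i) (X j) μ μ) (n M : ℕ) (v : Fin M → (Fin k → ℤ)) :
    μ (tup X n M ⁻¹' {v}) = ∏ i : Fin M, μ (X 0 ⁻¹' {v i}) := by
  rw [tup_preimage_singleton]
  rw [hindep.meas_biInter (fun j _ => ⟨_, measurableSet_singleton _, rfl⟩)]
  rw [Finset.prod_image (by intro a _ b _ hab; simp only at hab; omega)]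
  have hL : ∀ i ∈ Finset.range M,
      μ (X (n + i) ⁻¹' {if h : n + i - n < M then v ⟨n + i - n, h⟩ else 0})
        = μ (X 0 ⁻¹' {if h : i < M then v ⟨i, h⟩ else 0}) := by
    intro i hi
    have h2 : n + i - n = i := by omega
    rw [show (if h : n + i - n < M then v ⟨n + i - n, h⟩ else 0)
          = (if h : i < M then v ⟨i, h⟩ else 0) by simp only [h2]]
    exact (hident (n + i) 0).measure_mem_eq (measurableSet_singleton _)
  rw [Finset.prod_congr rfl hL,
    ← Fin.prod_univ_eq_prod_range (fun i => μ (X 0 ⁻¹' {if h : i < M then v ⟨i, h⟩ else 0})) M]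
  refine Finset.prod_congr rfl fun i _ => ?_
  congr 1
  simp [i.2]

lemma meas_tup_preimage_eq (hmeas : ∀ i, Measurable (X i))
    (hindep : iIndepFun X μ)
    (hident : ∀ i j, IdentDistrib (X i) (X j) μ μ) (n M : ℕ)
    (C : Set (Fin M → (Fin k → ℤ))) :
    μ (tup X n M ⁻¹' C) = μ (tup X 0 M ⁻¹' C) := by
  have h1 : μ.map (tup X n M) = μ.map (tup X 0 M) := by
    apply MeasureTheory.Measure.ext_of_singleton
    intro v
    rw [Measure.map_apply (tup_measurable hmeas n M) (measurableSet_singleton v),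
      Measure.map_apply (tup_measurable hmeas 0 M) (measurableSet_singleton v),
      meas_tup_singleton hmeas hindep hident,
      meas_tup_singleton hmeas hindep hident]
  calc μ (tup X n M ⁻¹' C) = μ.map (tup X n M) C := by
        rw [Measure.map_apply (tup_measurable hmeas n M) C.to_countable.measurableSet]
    _ = μ.map (tup X 0 M) C := by rw [h1]
    _ = μ (tup X 0 M ⁻¹' C) :=
        Measure.map_apply (tup_measurable hmeas 0 M) C.to_countable.measurableSet

lemma meas_tup_inter (hmeas : ∀ i, Measurable (X i))
    (hindep : iIndepFun X μ) (a b : ℕ)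
    (C : Set (Fin a → (Fin k → ℤ))) (D : Set (Fin b → (Fin k → ℤ))) :
    μ (tup X 0 a ⁻¹' C ∩ tup X a b ⁻¹' D)
      = μ (tup X 0 a ⁻¹' C) * μ (tup X a b ⁻¹' D) := by
  classical
  have hST : Disjoint (Finset.range a) ((Finset.range b).image (a + ·)) := by
    rw [Finset.disjoint_left]
    intro x hx hxT
    simp only [Finset.mem_range, Finset.mem_image] at hx hxT
    obtain ⟨i, _, rfl⟩ := hxT
    omega
  have h := hindep.indepFun_finset (Finset.range a) ((Finset.range b).image (a + ·)) hST hmeas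
  have hφ : Measurable (fun (g : ↥(Finset.range a) → (Fin k → ℤ)) (i : Fin a) =>
      g ⟨i.1, Finset.mem_range.mpr i.2⟩) :=
    measurable_pi_lambda _ fun i => measurable_pi_apply _
  have hψ : Measurable (fun (g : ↥((Finset.range b).image (a + ·)) → (Fin k → ℤ))
      (i : Fin b) => g ⟨a + i.1, Finset.mem_image.mpr ⟨i.1, Finset.mem_range.mpr i.2, rfl⟩⟩) :=
    measurable_pi_lambda _ fun i => measurable_pi_apply _
  have h2 := h.comp hφ hψ
  have e1 : ((fun (g : ↥(Finset.range a) → (Fin k → ℤ)) (i : Fin a) =>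
      g ⟨i.1, Finset.mem_range.mpr i.2⟩) ∘ (fun ω (i : ↥(Finset.range a)) => X i ω))
      = tup X 0 a := by
    funext ω i
    simp [tup, Function.comp]
  have e2 : ((fun (g : ↥((Finset.range b).image (a + ·)) → (Fin k → ℤ))
      (i : Fin b) => g ⟨a + i.1, Finset.mem_image.mpr ⟨i.1, Finset.mem_range.mpr i.2, rfl⟩⟩)
      ∘ (fun ω (i : ↥((Finset.range b).image (a + ·))) => X i ω)) = tup X a b := by
    funext ω i
    simp [tup, Function.comp]
  rw [e1, e2] at h2
  exact h2.measure_inter_preimage_eq_mul C D C.to_countable.measurableSet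
    D.to_countable.measurableSet

/-- The set of tuples summing to zero. -/
def Zset (k M : ℕ) : Set (Fin M → (Fin k → ℤ)) := {w | ∑ i, w i = 0}

lemma incr_eq (X : ℕ → Ω → (Fin k → ℤ)) (n L : ℕ) :
    {ω | ∑ i ∈ Finset.range L, X (n + i) ω = 0} = tup X n L ⁻¹' Zset k L := by
  ext ω
  simp only [Set.mem_setOf_eq, Set.mem_preimage, Zset, tup]
  rw [Fin.sum_univ_eq_sum_range (fun i => X (n + i) ω) L]

lemma sum_event_eq (X : ℕ → Ω → (Fin k → ℤ)) (n : ℕ) :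
    {ω | ∑ i ∈ Finset.range n, X i ω = 0} = tup X 0 n ⁻¹' Zset k n := by
  have h := incr_eq X 0 n
  simpa only [zero_add] using h

/-- `uu μ X n` is the probability that the walk is at `0` at time `n`. -/
def uu (μ : Measure Ω) (X : ℕ → Ω → (Fin k → ℤ)) (n : ℕ) : ℝ≥0∞ :=
  μ {ω | ∑ i ∈ Finset.range n, X i ω = 0}

lemma uu_def (n : ℕ) : uu μ X n = μ {ω | ∑ i ∈ Finset.range n, X i ω = 0} := rfl

lemma uu_eq_tup (n : ℕ) : uu μ X n = μ (tup X 0 n ⁻¹' Zset k n) := by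
  rw [uu_def, sum_event_eq]

lemma uu_zero : uu μ X 0 = 1 := by
  have : {ω : Ω | ∑ i ∈ Finset.range 0, X i ω = 0} = Set.univ := by
    ext ω; simp
  rw [uu_def, this, measure_univ]

lemma uu_le_one (n : ℕ) : uu μ X n ≤ 1 := prob_le_one

lemma uu_incr (hmeas : ∀ i, Measurable (X i))
    (hindep : iIndepFun X μ)
    (hident : ∀ i j, IdentDistrib (X i) (X j) μ μ) (n L : ℕ) :
    μ {ω | ∑ i ∈ Finset.range L, X (n + i) ω = 0} = uu μ X L := by
  rw [incr_eq, meas_tup_preimage_eq hmeas hindep hident, ← uu_eq_tup]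

lemma uu_subadd (hmeas : ∀ i, Measurable (X i))
    (hindep : iIndepFun X μ)
    (hident : ∀ i j, IdentDistrib (X i) (X j) μ μ) (a b : ℕ) :
    uu μ X a * uu μ X b ≤ uu μ X (a + b) := by
  have hsub : (tup X 0 a ⁻¹' Zset k a) ∩ (tup X a b ⁻¹' Zset k b)
      ⊆ {ω | ∑ i ∈ Finset.range (a + b), X i ω = 0} := by
    rintro ω ⟨h1, h2⟩
    rw [← sum_event_eq] at h1
    rw [← incr_eq] at h2
    simp only [Set.mem_setOf_eq] at h1 h2 ⊢
    rw [Finset.sum_range_add, h1, h2, add_zero]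
  calc uu μ X a * uu μ X b
      = μ (tup X 0 a ⁻¹' Zset k a) * μ (tup X a b ⁻¹' Zset k b) := by
        rw [uu_eq_tup, uu_eq_tup, ← meas_tup_preimage_eq hmeas hindep hident a b (Zset k b)]
    _ = μ ((tup X 0 a ⁻¹' Zset k a) ∩ (tup X a b ⁻¹' Zset k b)) :=
        (meas_tup_inter hmeas hindep a b _ _).symm
    _ ≤ uu μ X (a + b) := measure_mono hsub

lemma sum_range_eq_sum_filter {β : Type*} [AddCommMonoid β] (g : ℕ → β) {l L : ℕ} (hl : l ≤ L) :
    ∑ i ∈ Finset.range l, g i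
      = ∑ i ∈ Finset.univ.filter (fun i : Fin L => i.1 < l), g i.1 := by
  have h1 : Finset.range l = (Finset.range L).filter (· < l) := by
    ext j; simp only [Finset.mem_filter, Finset.mem_range]; omega
  rw [h1, Finset.sum_filter,
    ← Fin.sum_univ_eq_sum_range (fun j => if j < l then g j else 0) L, ← Finset.sum_filter]

/-- Event inside the tuple space: the partial sums return to zero by time `L`. -/
def DL (k L : ℕ) : Set (Fin L → (Fin k → ℤ)) :=
  {w | ∃ l, 0 < l ∧ l ≤ L ∧ ∑ i ∈ Finset.univ.filter (fun i : Fin L => i.1 < l), w i = 0}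

lemma BNL_eq (X : ℕ → Ω → (Fin k → ℤ)) (N L : ℕ) :
    {ω | ∃ l, 0 < l ∧ l ≤ L ∧ ∑ i ∈ Finset.range l, X (N + i) ω = 0}
      = tup X N L ⁻¹' DL k L := by
  ext ω
  simp only [Set.mem_setOf_eq, Set.mem_preimage, DL, tup]
  constructor
  · rintro ⟨l, hl0, hlL, hsum⟩
    exact ⟨l, hl0, hlL, by
      rw [← sum_range_eq_sum_filter (fun j => X (N + j) ω) hlL]; exact hsum⟩
  · rintro ⟨l, hl0, hlL, hsum⟩
    exact ⟨l, hl0, hlL, by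
      rw [sum_range_eq_sum_filter (fun j => X (N + j) ω) hlL]; exact hsum⟩

lemma AN_eq (X : ℕ → Ω → (Fin k → ℤ)) (N : ℕ) :
    {ω | ∃ l, 0 < l ∧ ∑ i ∈ Finset.range l, X (N + i) ω = 0}
      = ⋃ L, tup X N L ⁻¹' DL k L := by
  ext ω
  simp only [Set.mem_iUnion, ← BNL_eq, Set.mem_setOf_eq]
  constructor
  · rintro ⟨l, h0, hs⟩; exact ⟨l, l, h0, le_rfl, hs⟩
  · rintro ⟨L, l, h0, _, hs⟩; exact ⟨l, h0, hs⟩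

lemma AN_meas (hmeas : ∀ i, Measurable (X i)) (N : ℕ) :
    MeasurableSet {ω | ∃ l, 0 < l ∧ ∑ i ∈ Finset.range l, X (N + i) ω = 0} := by
  rw [AN_eq]
  exact MeasurableSet.iUnion fun L =>
    (tup_measurable hmeas N L) (DL k L).to_countable.measurableSet

lemma AN_prob (hmeas : ∀ i, Measurable (X i))
    (hindep : iIndepFun X μ)
    (hident : ∀ i j, IdentDistrib (X i) (X j) μ μ) (N : ℕ) :
    μ {ω | ∃ l, 0 < l ∧ ∑ i ∈ Finset.range l, X (N + i) ω = 0}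
      = μ {ω | ∃ l, 0 < l ∧ ∑ i ∈ Finset.range l, X i ω = 0} := by
  have h0 : {ω : Ω | ∃ l, 0 < l ∧ ∑ i ∈ Finset.range l, X i ω = 0}
      = {ω | ∃ l, 0 < l ∧ ∑ i ∈ Finset.range l, X (0 + i) ω = 0} := by
    simp only [zero_add]
  rw [h0, AN_eq, AN_eq]
  have hmono : ∀ N', Monotone (fun L => tup X N' L ⁻¹' DL k L) := by
    intro N' L L' hLL ω hω
    simp only at hω ⊢
    rw [← BNL_eq] at hω ⊢
    obtain ⟨l, h0l, hl, hs⟩ := hω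
    exact ⟨l, h0l, hl.trans hLL, hs⟩
  rw [Directed.measure_iUnion (hmono N).directed_le,
    Directed.measure_iUnion (hmono 0).directed_le]
  exact iSup_congr fun L => meas_tup_preimage_eq hmeas hindep hident N L (DL k L)

/-- Under recurrence, the expected number of returns is infinite. -/
lemma sum_uu_top (hmeas : ∀ i, Measurable (X i))
    (hindep : iIndepFun X μ)
    (hident : ∀ i j, IdentDistrib (X i) (X j) μ μ)
    (hrec' : μ {ω | ∃ l, 0 < l ∧ ∑ i ∈ Finset.range l, X i ω = 0} = 1) :
    ∑' n, uu μ X n = ⊤ := by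
  classical
  set A : Set Ω := ⋂ N, {ω | ∃ l, 0 < l ∧ ∑ i ∈ Finset.range l, X (N + i) ω = 0} with hAdef
  have hA : MeasurableSet A := MeasurableSet.iInter fun N => AN_meas hmeas N
  have hAN1 : ∀ N, μ {ω | ∃ l, 0 < l ∧ ∑ i ∈ Finset.range l, X (N + i) ω = 0} = 1 :=
    fun N => by rw [AN_prob hmeas hindep hident N]; exact hrec'
  have hA1 : μ A = 1 := by
    have hc : μ Aᶜ = 0 := by
      rw [hAdef, Set.compl_iInter]
      refine le_antisymm (le_trans (measure_iUnion_le _) ?_) zero_le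
      have hz : ∀ N, μ ({ω : Ω | ∃ l, 0 < l ∧ ∑ i ∈ Finset.range l, X (N + i) ω = 0}ᶜ) = 0 := by
        intro N
        rw [measure_compl (AN_meas hmeas N) (measure_ne_top μ _), hAN1 N, measure_univ,
          tsub_self]
      simp [hz]
    have h2 := measure_compl hA (measure_ne_top μ _)
    rw [measure_univ, hc] at h2
    have h3 : (1 : ℝ≥0∞) ≤ μ A := by rwa [eq_comm, tsub_eq_zero_iff_le] at h2
    exact le_antisymm prob_le_one h3
  set Sset : ℕ → Set Ω := fun n => {ω | 0 < n ∧ ∑ i ∈ Finset.range n, X i ω = 0} with hSdef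
  have hSmeas : ∀ n, MeasurableSet (Sset n) := by
    intro n
    rcases Nat.eq_zero_or_pos n with h | h
    · have : Sset n = ∅ := by ext ω; simp [hSdef, h]
      rw [this]; exact MeasurableSet.empty
    · have : Sset n = tup X 0 n ⁻¹' Zset k n := by
        rw [← sum_event_eq]
        ext ω; simp [hSdef, h]
      rw [this]
      exact (tup_measurable hmeas 0 n) (Zset k n).to_countable.measurableSet
  have hcount : ∫⁻ ω, ∑' n, (Sset n).indicator (fun _ => (1 : ℝ≥0∞)) ω ∂μ
      = ∑' n, μ (Sset n) := by
    rw [lintegral_tsum fun n => (((measurable_const (a := (1 : ℝ≥0∞))).indicator (hSmeas n)).aemeasurable)]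
    exact tsum_congr fun n => by rw [lintegral_indicator_const (hSmeas n), one_mul]
  have htopA : ∀ ω ∈ A, (∑' n, (Sset n).indicator (fun _ => (1 : ℝ≥0∞)) ω) = ⊤ := by
    intro ω hω
    have key : ∀ N, (∑ i ∈ Finset.range N, X i ω = 0) →
        ∃ l, 0 < l ∧ ∑ i ∈ Finset.range (N + l), X i ω = 0 := by
      intro N hN
      have hAω := Set.mem_iInter.mp hω N
      obtain ⟨l, hl0, hls⟩ := hAω
      exact ⟨l, hl0, by rw [Finset.sum_range_add, hN, hls, add_zero]⟩
    have base : ∀ a : ℕ, ∃ n, a ≤ n ∧ ∑ i ∈ Finset.range n, X i ω = 0 := by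
      intro a
      induction a with
      | zero => exact ⟨0, le_rfl, by simp⟩
      | succ a ih =>
        obtain ⟨n, hn, hs⟩ := ih
        obtain ⟨l, hl0, hs'⟩ := key n hs
        exact ⟨n + l, by omega, hs'⟩
    have hinf : {n | ω ∈ Sset n}.Infinite := by
      apply Set.infinite_of_forall_exists_gt
      intro a
      obtain ⟨n, hn, hs⟩ := base (a + 1)
      exact ⟨n, ⟨by omega, hs⟩, by omega⟩
    have heq : (fun n => (Sset n).indicator (fun _ => (1 : ℝ≥0∞)) ω)
        = fun n => ({n | ω ∈ Sset n}).indicator (fun _ => (1 : ℝ≥0∞)) n := by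
      funext n
      by_cases h : ω ∈ Sset n <;> simp [Set.indicator, h]
    rw [heq, ← tsum_subtype]
    haveI := hinf.to_subtype
    exact ENNReal.tsum_const_eq_top_of_ne_zero one_ne_zero
  have hSsum : ∑' n, μ (Sset n) = ⊤ := by
    rw [← hcount]
    refine top_le_iff.mp ?_
    calc (⊤ : ℝ≥0∞) = ⊤ * μ A := by rw [hA1, mul_one]
      _ = ∫⁻ ω in A, ⊤ ∂μ := (setLIntegral_const A ⊤).symm
      _ = ∫⁻ ω in A, ∑' n, (Sset n).indicator (fun _ => (1 : ℝ≥0∞)) ω ∂μ :=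
          (setLIntegral_congr_fun hA htopA).symm
      _ ≤ ∫⁻ ω, ∑' n, (Sset n).indicator (fun _ => (1 : ℝ≥0∞)) ω ∂μ :=
          setLIntegral_le_lintegral A _
  refine top_le_iff.mp ?_
  rw [← hSsum]
  refine Summable.tsum_le_tsum (fun n => ?_) ENNReal.summable ENNReal.summable
  exact measure_mono fun ω h => h.2

/-- Purely numeric lemma: from divergence of the full Green series and supermultiplicativity,
the Green series along multiples of `m` also diverges. -/
lemma aux_seq (m : ℕ) (hm : 0 < m) (u : ℕ → ℝ≥0∞) (h0 : u 0 = 1)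
    (hsub : ∀ a b, u a * u b ≤ u (a + b)) (htop : ∑' n, u n = ⊤) :
    ∑' q, u (m * (q + 1)) = ⊤ := by
  haveI : NeZero m := ⟨hm.ne'⟩
  have h1 : ∑' (p : ℕ × Fin m), u (p.1 * m + p.2.1) = ⊤ := by
    rw [← htop, ← Equiv.tsum_eq (Nat.divModEquiv m).symm u]
    exact tsum_congr fun p => by simp [Nat.divModEquiv]
  rw [ENNReal.tsum_prod (f := fun q (r : Fin m) => u (q * m + r.1))] at h1
  have h2 : ∑' (q : ℕ), ∑' (r : Fin m), u (q * m + r.1)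
      = ∑ r : Fin m, ∑' q, u (q * m + r.1) := by
    rw [tsum_congr fun q => tsum_fintype _]
    exact Summable.tsum_finsetSum fun r _ => ENNReal.summable
  obtain ⟨r, hr⟩ : ∃ r : Fin m, ∑' q, u (q * m + r.1) = ⊤ := by
    by_contra hcon
    push_neg at hcon
    have hne : ∑ r : Fin m, ∑' q, u (q * m + r.1) ≠ ⊤ :=
      (ENNReal.sum_lt_top.mpr fun r _ => (hcon r).lt_top).ne
    rw [h2] at h1
    exact hne h1
  rcases Nat.eq_zero_or_pos r.1 with hr0 | hr0
  · simp only [hr0, add_zero] at hr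
    have hzs := tsum_eq_zero_add' (f := fun q => u (q * m)) ENNReal.summable
    rw [hzs] at hr
    simp only [zero_mul, h0] at hr
    have htail : ∑' q, u ((q + 1) * m) = ⊤ := by
      rcases ENNReal.add_eq_top.mp hr with h | h
      · exact absurd h ENNReal.one_ne_top
      · exact h
    rw [← htail]
    exact tsum_congr fun q => by rw [mul_comm]
  · obtain ⟨q0, hq0⟩ : ∃ q0, u (q0 * m + r.1) ≠ 0 := by
      by_contra hcon
      push_neg at hcon
      have : ∑' q, u (q * m + r.1) = 0 := by simp [hcon]
      rw [this] at hr
      exact ENNReal.zero_ne_top hr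
    obtain ⟨mm, rfl⟩ : ∃ mm, m = mm + 1 := ⟨m - 1, by omega⟩
    have chain : ∀ j a, u a * (u (q0 * (mm + 1) + r.1)) ^ j ≤ u (a + j * (q0 * (mm + 1) + r.1)) := by
      intro j
      induction j with
      | zero => intro a; simp
      | succ j ih =>
        intro a
        calc u a * u (q0 * (mm + 1) + r.1) ^ (j + 1)
            = (u a * u (q0 * (mm + 1) + r.1) ^ j) * u (q0 * (mm + 1) + r.1) := by ring
          _ ≤ u (a + j * (q0 * (mm + 1) + r.1)) * u (q0 * (mm + 1) + r.1) :=
              mul_le_mul_left (ih a) _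
          _ ≤ u (a + j * (q0 * (mm + 1) + r.1) + (q0 * (mm + 1) + r.1)) := hsub _ _
          _ = u (a + (j + 1) * (q0 * (mm + 1) + r.1)) := by
              congr 1; ring
    have key : ∀ q, u (q * (mm + 1) + r.1) * (u (q0 * (mm + 1) + r.1)) ^ mm
        ≤ u ((mm + 1) * (q + (mm * q0 + r.1))) := by
      intro q
      have hch := chain mm (q * (mm + 1) + r.1)
      have harith : q * (mm + 1) + r.1 + mm * (q0 * (mm + 1) + r.1)
          = (mm + 1) * (q + (mm * q0 + r.1)) := by ring
      rwa [harith] at hch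
    have h3 : ∑' q, (u (q * (mm + 1) + r.1) * (u (q0 * (mm + 1) + r.1)) ^ mm) = ⊤ := by
      rw [ENNReal.tsum_mul_right, hr, ENNReal.top_mul (pow_ne_zero mm hq0)]
    have hsum2 : ∑' q, u ((mm + 1) * (q + (mm * q0 + r.1))) = ⊤ :=
      top_le_iff.mp (h3 ▸ Summable.tsum_le_tsum key ENNReal.summable ENNReal.summable)
    have hc1 : 1 ≤ mm * q0 + r.1 := by omega
    have h4 : ∑' q, u ((mm + 1) * (q + (mm * q0 + r.1))) ≤ ∑' q, u ((mm + 1) * (q + 1)) := by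
      have h5 := ENNReal.tsum_comp_le_tsum_of_injective
        (add_left_injective (mm * q0 + r.1 - 1)) (fun q => u ((mm + 1) * (q + 1)))
      calc ∑' q, u ((mm + 1) * (q + (mm * q0 + r.1)))
          = ∑' q, u ((mm + 1) * ((q + (mm * q0 + r.1 - 1)) + 1)) :=
            tsum_congr fun q => by congr 2; omega
        _ ≤ ∑' q, u ((mm + 1) * (q + 1)) := h5
    exact top_le_iff.mp (hsum2 ▸ h4)

/-- Triangle sum exchange. -/
lemma tri (N : ℕ) (g : ℕ → ℕ → ℝ≥0∞) :
    ∑ n ∈ Finset.Icc 1 N, ∑ t ∈ Finset.Icc 1 n, g t n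
      = ∑ t ∈ Finset.Icc 1 N, ∑ n ∈ Finset.Icc t N, g t n := by
  induction N with
  | zero => simp
  | succ N ih =>
    have h1 : ∀ t ∈ Finset.Icc 1 N,
        ∑ n ∈ Finset.Icc t (N + 1), g t n = ∑ n ∈ Finset.Icc t N, g t n + g t (N + 1) :=
      fun t ht => Finset.sum_Icc_succ_top (by
        have := (Finset.mem_Icc.mp ht).2; omega) _
    calc ∑ n ∈ Finset.Icc 1 (N + 1), ∑ t ∈ Finset.Icc 1 n, g t n
        = (∑ n ∈ Finset.Icc 1 N, ∑ t ∈ Finset.Icc 1 n, g t n)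
            + ∑ t ∈ Finset.Icc 1 (N + 1), g t (N + 1) :=
          Finset.sum_Icc_succ_top (by omega) _
      _ = (∑ t ∈ Finset.Icc 1 N, ∑ n ∈ Finset.Icc t N, g t n)
            + ((∑ t ∈ Finset.Icc 1 N, g t (N + 1)) + g (N + 1) (N + 1)) := by
          rw [ih, Finset.sum_Icc_succ_top (show (1 : ℕ) ≤ N + 1 by omega)
            (fun t => g t (N + 1))]
      _ = (∑ t ∈ Finset.Icc 1 N, (∑ n ∈ Finset.Icc t N, g t n + g t (N + 1)))
            + g (N + 1) (N + 1) := by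
          rw [Finset.sum_add_distrib, ← add_assoc]
      _ = (∑ t ∈ Finset.Icc 1 N, ∑ n ∈ Finset.Icc t (N + 1), g t n) + g (N + 1) (N + 1) := by
          rw [Finset.sum_congr rfl fun t ht => (h1 t ht).symm]
      _ = ∑ t ∈ Finset.Icc 1 (N + 1), ∑ n ∈ Finset.Icc t (N + 1), g t n := by
          rw [Finset.sum_Icc_succ_top (show (1 : ℕ) ≤ N + 1 by omega)
            (fun t => ∑ n ∈ Finset.Icc t (N + 1), g t n)]
          simp [Finset.Icc_self]

end SubsampledAux

open SubsampledAux

/-- if a random walk on ℤ^k with i.i.d. steps is recurrent, then for every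
positive `m` the subsampled walk `Y^0_i = Y_{m·i}` is also recurrent. -/
theorem subsampled_walk_recurrent
    {k : ℕ}
    {Ω : Type*} [MeasurableSpace Ω] (μ : Measure Ω) [IsProbabilityMeasure μ]
    (X : ℕ → Ω → (Fin k → ℤ))
    (hmeas : ∀ i, Measurable (X i))
    (hindep : iIndepFun X μ)
    (hident : ∀ i j, IdentDistrib (X i) (X j) μ μ)
    (Y : ℕ → Ω → (Fin k → ℤ))
    (hY : ∀ n ω, Y n ω = ∑ i ∈ Finset.range n, X i ω)
    (hrec : μ {ω | ∃ n > 0, Y n ω = 0} = 1) :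
    ∀ m : ℕ, 0 < m → μ {ω | ∃ n > 0, Y (m * n) ω = 0} = 1 := by
  classical
  intro m hm
  -- rewrite everything in terms of the steps
  have hrec' : μ {ω | ∃ l, 0 < l ∧ ∑ i ∈ Finset.range l, X i ω = 0} = 1 := by
    rw [← hrec]
    congr 1
    ext ω
    simp only [Set.mem_setOf_eq, gt_iff_lt, hY]
  have hset : {ω | ∃ n > 0, Y (m * n) ω = 0}
      = {ω | ∃ n, 0 < n ∧ ∑ i ∈ Finset.range (m * n), X i ω = 0} := by
    ext ω
    simp only [Set.mem_setOf_eq, gt_iff_lt, hY]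
  rw [hset]
  set Bset : Set Ω := {ω | ∃ n, 0 < n ∧ ∑ i ∈ Finset.range (m * n), X i ω = 0} with hBdef
  refine le_antisymm prob_le_one ?_
  by_contra hlt
  push_neg at hlt
  set F : ℝ≥0∞ := μ Bset with hFdef
  -- the diverging series along multiples of m
  have htopsum : ∑' q, uu μ X (m * (q + 1)) = ⊤ :=
    aux_seq m hm (uu μ X) uu_zero (fun a b => uu_subadd hmeas hindep hident a b)
      (sum_uu_top hmeas hindep hident hrec')
  -- first-return events
  set R : ℕ → Set Ω := fun t => {ω | (∑ i ∈ Finset.range (m * t), X i ω = 0)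
    ∧ ∀ s, 0 < s → s < t → ¬(∑ i ∈ Finset.range (m * s), X i ω = 0)} with hRdef
  set Ct : (t : ℕ) → Set (Fin (m * t) → (Fin k → ℤ)) := fun t =>
    {w | (∑ i ∈ Finset.univ.filter (fun i : Fin (m * t) => i.1 < m * t), w i = 0)
      ∧ ∀ s, 0 < s → s < t →
        ¬(∑ i ∈ Finset.univ.filter (fun i : Fin (m * t) => i.1 < m * s), w i = 0)} with hCtdef
  have R_eq : ∀ t, R t = tup X 0 (m * t) ⁻¹' Ct t := by
    intro t
    ext ω
    simp only [hRdef, hCtdef, Set.mem_setOf_eq, Set.mem_preimage, tup, zero_add]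
    constructor
    · rintro ⟨h1, h2⟩
      refine ⟨?_, ?_⟩
      · rw [← sum_range_eq_sum_filter (fun j => X j ω) (le_refl (m * t))]
        exact h1
      · intro s hs0 hst hcon
        refine h2 s hs0 hst ?_
        rw [sum_range_eq_sum_filter (fun j => X j ω) (Nat.mul_le_mul_left m hst.le)]
        exact hcon
    · rintro ⟨h1, h2⟩
      refine ⟨?_, ?_⟩
      · rw [sum_range_eq_sum_filter (fun j => X j ω) (le_refl (m * t))]
        exact h1
      · intro s hs0 hst hcon
        refine h2 s hs0 hst ?_
        rw [← sum_range_eq_sum_filter (fun j => X j ω) (Nat.mul_le_mul_left m hst.le)]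
        exact hcon
  have hRmeas : ∀ t, MeasurableSet (R t) := fun t => by
    rw [R_eq t]
    exact (tup_measurable hmeas 0 (m * t)) (Ct t).to_countable.measurableSet
  -- decomposition over the first return time
  have hdec : ∀ n, 0 < n → {ω | ∑ i ∈ Finset.range (m * n), X i ω = 0} ⊆
      ⋃ t ∈ Finset.Icc 1 n,
        (R t ∩ {ω | ∑ i ∈ Finset.range (m * n - m * t), X (m * t + i) ω = 0}) := by
    intro n hn ω hω
    simp only [Set.mem_setOf_eq] at hω
    have hP : ∃ s, 0 < s ∧ s ≤ n ∧ ∑ i ∈ Finset.range (m * s), X i ω = 0 :=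
      ⟨n, hn, le_rfl, hω⟩
    obtain ⟨t, ⟨ht0, htn, hts⟩, htmin⟩ :
        ∃ t, (0 < t ∧ t ≤ n ∧ ∑ i ∈ Finset.range (m * t), X i ω = 0)
          ∧ ∀ s, s < t → ¬(0 < s ∧ s ≤ n ∧ ∑ i ∈ Finset.range (m * s), X i ω = 0) := by
      have := Nat.find_spec hP
      exact ⟨Nat.find hP, this, fun s hs => Nat.find_min hP hs⟩
    have hRt : ω ∈ R t := by
      refine ⟨hts, fun s hs0 hst hcon => ?_⟩
      exact htmin s hst ⟨hs0, le_trans hst.le htn, hcon⟩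
    have hIncr : ∑ i ∈ Finset.range (m * n - m * t), X (m * t + i) ω = 0 := by
      have hmt : m * t + (m * n - m * t) = m * n := by
        have := Nat.mul_le_mul_left m htn
        omega
      have hsplit := Finset.sum_range_add (fun i => X i ω) (m * t) (m * n - m * t)
      rw [hmt] at hsplit
      rw [hsplit, hts, zero_add] at hω
      exact hω
    exact Set.mem_biUnion (Finset.mem_Icc.mpr ⟨ht0, htn⟩) ⟨hRt, hIncr⟩
  -- the renewal inequality
  have hub : ∀ n, 0 < n →
      uu μ X (m * n) ≤ ∑ t ∈ Finset.Icc 1 n, μ (R t) * uu μ X (m * (n - t)) := by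
    intro n hn
    have step1 : uu μ X (m * n)
        ≤ ∑ t ∈ Finset.Icc 1 n,
            μ (R t ∩ {ω | ∑ i ∈ Finset.range (m * n - m * t), X (m * t + i) ω = 0}) :=
      le_trans (measure_mono (hdec n hn)) (measure_biUnion_finset_le _ _)
    refine le_trans step1 (le_of_eq (Finset.sum_congr rfl fun t ht => ?_))
    obtain ⟨ht1, htn⟩ := Finset.mem_Icc.mp ht
    have e2 : {ω : Ω | ∑ i ∈ Finset.range (m * n - m * t), X (m * t + i) ω = 0}
        = tup X (m * t) (m * n - m * t) ⁻¹' Zset k (m * n - m * t) :=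
      incr_eq X (m * t) (m * n - m * t)
    have hmnt : m * n - m * t = m * (n - t) := by
      obtain ⟨d, rfl⟩ : ∃ d, n = t + d := ⟨n - t, by omega⟩
      rw [Nat.mul_add, Nat.add_sub_cancel_left, Nat.add_sub_cancel_left]
    calc μ (R t ∩ {ω | ∑ i ∈ Finset.range (m * n - m * t), X (m * t + i) ω = 0})
        = μ ((tup X 0 (m * t) ⁻¹' Ct t)
            ∩ (tup X (m * t) (m * n - m * t) ⁻¹' Zset k (m * n - m * t))) := by
          rw [← R_eq t, ← e2]
      _ = μ (tup X 0 (m * t) ⁻¹' Ct t)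
            * μ (tup X (m * t) (m * n - m * t) ⁻¹' Zset k (m * n - m * t)) :=
          meas_tup_inter hmeas hindep (m * t) (m * n - m * t) _ _
      _ = μ (R t) * uu μ X (m * (n - t)) := by
          rw [← R_eq t, meas_tup_preimage_eq hmeas hindep hident, ← uu_eq_tup, hmnt]
  -- the first-return probabilities sum to at most F
  have hfsum : ∀ N, ∑ t ∈ Finset.Icc 1 N, μ (R t) ≤ F := by
    intro N
    have hdisj : Set.PairwiseDisjoint ↑(Finset.Icc 1 N) R := by
      intro t1 h1 t2 h2 hne
      apply Set.disjoint_left.mpr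
      intro ω hω1 hω2
      rcases lt_or_gt_of_ne hne with h | h
      · have ht1 : 0 < t1 := (Finset.mem_Icc.mp (Finset.mem_coe.mp h1)).1
        exact hω2.2 t1 ht1 h hω1.1
      · have ht2 : 0 < t2 := (Finset.mem_Icc.mp (Finset.mem_coe.mp h2)).1
        exact hω1.2 t2 ht2 h hω2.1
    rw [← measure_biUnion_finset hdisj fun t _ => hRmeas t]
    apply measure_mono
    intro ω hω
    simp only [Set.mem_iUnion] at hω
    obtain ⟨t, ht, hmem⟩ := hω
    exact ⟨t, (Finset.mem_Icc.mp ht).1, hmem.1⟩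
  -- partial sums of the Green series along multiples of m
  set U : ℕ → ℝ≥0∞ := fun N => ∑ n ∈ Finset.range (N + 1), uu μ X (m * n) with hU
  have hUbound : ∀ N, U N ≤ 1 + F * U N := by
    intro N
    have h1 : U N = (∑ i ∈ Finset.range N, uu μ X (m * (i + 1))) + uu μ X (m * 0) :=
      Finset.sum_range_succ' (fun n => uu μ X (m * n)) N
    have hreidx : ∑ i ∈ Finset.range N, uu μ X (m * (i + 1))
        = ∑ n ∈ Finset.Icc 1 N, uu μ X (m * n) := by
      rw [← Finset.Ico_add_one_right_eq_Icc, Finset.sum_Ico_eq_sum_range]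
      exact Finset.sum_congr rfl fun i _ => by rw [add_comm 1 i]
    have h2 : ∑ n ∈ Finset.Icc 1 N, uu μ X (m * n)
        ≤ ∑ n ∈ Finset.Icc 1 N, ∑ t ∈ Finset.Icc 1 n, μ (R t) * uu μ X (m * (n - t)) := by
      refine Finset.sum_le_sum fun n hn => ?_
      exact hub n (Finset.mem_Icc.mp hn).1
    have h3 : ∑ n ∈ Finset.Icc 1 N, ∑ t ∈ Finset.Icc 1 n, μ (R t) * uu μ X (m * (n - t))
        = ∑ t ∈ Finset.Icc 1 N, ∑ n ∈ Finset.Icc t N, μ (R t) * uu μ X (m * (n - t)) :=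
      tri N (fun t n => μ (R t) * uu μ X (m * (n - t)))
    have h4 : ∀ t ∈ Finset.Icc 1 N,
        ∑ n ∈ Finset.Icc t N, uu μ X (m * (n - t)) ≤ U N := by
      intro t ht
      rw [← Finset.Ico_add_one_right_eq_Icc, Finset.sum_Ico_eq_sum_range]
      have he : ∀ j, m * (t + j - t) = m * j := fun j => by rw [Nat.add_sub_cancel_left]
      calc ∑ j ∈ Finset.range (N + 1 - t), uu μ X (m * (t + j - t))
          = ∑ j ∈ Finset.range (N + 1 - t), uu μ X (m * j) :=
            Finset.sum_congr rfl fun j _ => by rw [he j]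
        _ ≤ ∑ j ∈ Finset.range (N + 1), uu μ X (m * j) :=
            Finset.sum_le_sum_of_subset (Finset.range_subset_range.mpr (by omega))
        _ = U N := rfl
    have h5 : ∑ t ∈ Finset.Icc 1 N, ∑ n ∈ Finset.Icc t N, μ (R t) * uu μ X (m * (n - t))
        ≤ F * U N := by
      calc ∑ t ∈ Finset.Icc 1 N, ∑ n ∈ Finset.Icc t N, μ (R t) * uu μ X (m * (n - t))
          = ∑ t ∈ Finset.Icc 1 N, μ (R t) * ∑ n ∈ Finset.Icc t N, uu μ X (m * (n - t)) := by
            exact Finset.sum_congr rfl fun t _ => (Finset.mul_sum _ _ _).symm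
        _ ≤ ∑ t ∈ Finset.Icc 1 N, μ (R t) * U N :=
            Finset.sum_le_sum fun t ht => mul_le_mul_right (h4 t ht) _
        _ = (∑ t ∈ Finset.Icc 1 N, μ (R t)) * U N := by rw [Finset.sum_mul]
        _ ≤ F * U N := mul_le_mul_left (hfsum N) _
    calc U N = (∑ i ∈ Finset.range N, uu μ X (m * (i + 1))) + uu μ X (m * 0) := h1
      _ = uu μ X 0 + ∑ n ∈ Finset.Icc 1 N, uu μ X (m * n) := by
          rw [hreidx, Nat.mul_zero, add_comm]
      _ ≤ 1 + F * U N := by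
          rw [uu_zero]
          exact add_le_add_right (le_trans h2 (le_trans (le_of_eq h3) h5)) 1
  have hUfin : ∀ N, U N ≠ ⊤ := by
    intro N
    have hle : U N ≤ ((N + 1 : ℕ) : ℝ≥0∞) := by
      calc U N ≤ ∑ _n ∈ Finset.range (N + 1), (1 : ℝ≥0∞) :=
            Finset.sum_le_sum fun n _ => uu_le_one _
        _ = ((N + 1 : ℕ) : ℝ≥0∞) := by simp
    exact (lt_of_le_of_lt hle (ENNReal.natCast_lt_top _)).ne
  have h1F0 : 1 - F ≠ 0 := fun h => absurd (tsub_eq_zero_iff_le.mp h) (not_le.mpr hlt)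
  have hstep : ∀ N, U N ≤ 1 / (1 - F) := by
    intro N
    have h2 : U N - F * U N ≤ 1 := tsub_le_iff_right.mpr (hUbound N)
    have h3 : U N * (1 - F) ≤ 1 := by
      rw [mul_comm, ENNReal.sub_mul fun _ _ => hUfin N, one_mul]
      exact h2
    exact (ENNReal.le_div_iff_mul_le (Or.inl h1F0)
      (Or.inl ((tsub_le_self.trans_lt ENNReal.one_lt_top).ne))).mpr h3
  have hbound : ∑' q, uu μ X (m * (q + 1)) ≤ 1 / (1 - F) := by
    refine ENNReal.tsum_le_of_sum_range_le fun N => ?_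
    calc ∑ i ∈ Finset.range N, uu μ X (m * (i + 1))
        ≤ (∑ i ∈ Finset.range N, uu μ X (m * (i + 1))) + uu μ X (m * 0) := le_self_add
      _ = ∑ n ∈ Finset.range (N + 1), uu μ X (m * n) :=
          (Finset.sum_range_succ' (fun n => uu μ X (m * n)) N).symm
      _ = U N := rfl
      _ ≤ 1 / (1 - F) := hstep N
  rw [htopsum] at hbound
  have : 1 / (1 - F) = ⊤ := top_le_iff.mp hbound
  rw [one_div] at this
  exact h1F0 (ENNReal.inv_eq_top.mp this)
end

section
/- Let Y_n be a random walk on Z^k with i.i.d. steps satisfying the uniform bound P(Y_n = x) ≤ c/n^{3/2} for all x ∈ Z^k and n ≥ 1. Then for every ε > 0, the set of points x ∈ Z^k with P(∃ n, Y_n = x) > ε is finite. -/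
open MeasureTheory ProbabilityTheory

/-- for a random walk on ℤ^k with i.i.d. steps satisfying the uniform bound
`P(Y_n = x) ≤ c/n^{3/2}`, for every `ε > 0` the set of points visited with probability
greater than `ε` is finite. -/
theorem uniform_decay_implies_few_likely_points
    {k : ℕ}
    {Ω : Type*} [MeasurableSpace Ω] (μ : Measure Ω) [IsProbabilityMeasure μ]
    (X : ℕ → Ω → (Fin k → ℤ))
    (hmeas : ∀ i, Measurable (X i))
    (hindep : iIndepFun X μ)
    (hident : ∀ i j, IdentDistrib (X i) (X j) μ μ)
    (Y : ℕ → Ω → (Fin k → ℤ))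
    (hY : ∀ n ω, Y n ω = ∑ i ∈ Finset.range n, X i ω)
    (c : ℝ) (hc : 0 < c)
    (hbound : ∀ (x : Fin k → ℤ) (n : ℕ), 1 ≤ n →
      (μ {ω | Y n ω = x}).toReal ≤ c / (n : ℝ) ^ ((3 : ℝ) / 2)) :
    ∀ ε : ℝ, 0 < ε →
      {x : Fin k → ℤ | ε < (μ {ω | ∃ n, Y n ω = x}).toReal}.Finite := by
  intro ε hε
  -- measurability of Y n
  have hYmeas : ∀ n, Measurable (Y n) := by
    intro n
    have h : Y n = fun ω => ∑ i ∈ Finset.range n, X i ω := by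
      funext ω; exact hY n ω
    rw [h]
    exact Finset.measurable_sum _ (fun i _ => hmeas i)
  have hA : ∀ n (x : Fin k → ℤ), MeasurableSet {ω | Y n ω = x} := fun n x =>
    (hYmeas n) (measurableSet_singleton x)
  -- the dominating sequence
  set g : ℕ → ℝ := fun n => c / (n : ℝ) ^ ((3 : ℝ) / 2) with hgdef
  have hg_nonneg : ∀ n, 0 ≤ g n := fun n =>
    div_nonneg hc.le (Real.rpow_nonneg (Nat.cast_nonneg n) _)
  have hgsum : Summable g := by
    have h1 : Summable (fun n : ℕ => (n : ℝ) ^ (-((3 : ℝ) / 2))) :=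
      Real.summable_nat_rpow.mpr (by norm_num)
    have h2 := h1.mul_left c
    refine h2.congr (fun n => ?_)
    simp [hgdef, Real.rpow_neg (Nat.cast_nonneg n), div_eq_mul_inv]
  -- choose N ≥ 1 with tail sum < ε/2
  have htail : ∀ᶠ N in Filter.atTop, (∑' m, g (m + N)) < ε / 2 :=
    (tendsto_sum_nat_add g).eventually (gt_mem_nhds (half_pos hε))
  obtain ⟨N, hN1, hNtail⟩ := ((Filter.eventually_ge_atTop 1).and htail).exists
  -- the finite-horizon mass function
  set F : (Fin k → ℤ) → ENNReal := fun x => ∑ n ∈ Finset.range N, μ {ω | Y n ω = x} with hFdef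
  -- total mass of F is at most N
  have hFsum : (∑' x, F x) ≠ ⊤ := by
    have hswap : (∑' x, F x) = ∑ n ∈ Finset.range N, ∑' x, μ {ω | Y n ω = x} :=
      Summable.tsum_finsetSum (fun n _ => ENNReal.summable)
    have hone : ∀ n, (∑' x : Fin k → ℤ, μ {ω | Y n ω = x}) ≤ 1 := by
      intro n
      have hdisj : Pairwise (Function.onFun Disjoint fun x => {ω | Y n ω = x}) := by
        intro x y hxy
        refine Set.disjoint_left.mpr (fun ω h1 h2 => hxy ?_)
        exact h1.symm.trans h2
      rw [← measure_iUnion hdisj (fun x => hA n x)]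
      exact measure_mono (Set.subset_univ _) |>.trans (by simp)
    rw [hswap]
    refine ne_top_of_le_ne_top (?_ : (N : ENNReal) ≠ ⊤) ?_
    · exact ENNReal.natCast_ne_top N
    · calc ∑ n ∈ Finset.range N, ∑' x : Fin k → ℤ, μ {ω | Y n ω = x}
          ≤ ∑ n ∈ Finset.range N, 1 := Finset.sum_le_sum (fun n _ => hone n)
        _ = (N : ENNReal) := by simp
  have hFne : ∀ x, F x ≠ ⊤ := by
    intro x
    exact ne_top_of_le_ne_top hFsum (ENNReal.le_tsum x)
  -- the inclusion
  have hsub : {x : Fin k → ℤ | ε < (μ {ω | ∃ n, Y n ω = x}).toReal} ⊆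
      {x : Fin k → ℤ | ENNReal.ofReal (ε / 2) ≤ F x} := by
    intro x hx
    simp only [Set.mem_setOf_eq] at hx ⊢
    -- bound the hitting probability
    have hcover : {ω | ∃ n, Y n ω = x} ⊆
        (⋃ n ∈ Finset.range N, {ω | Y n ω = x}) ∪ ⋃ m, {ω | Y (m + N) ω = x} := by
      intro ω ⟨n, hn⟩
      rcases lt_or_ge n N with h | h
      · exact Or.inl (Set.mem_biUnion (Finset.mem_range.mpr h) hn)
      · exact Or.inr (Set.mem_iUnion.mpr ⟨n - N, by rwa [Nat.sub_add_cancel h]⟩)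
    have htailbound : (∑' m, μ {ω | Y (m + N) ω = x}) ≤ ENNReal.ofReal (ε / 2) := by
      have h1 : ∀ m, μ {ω | Y (m + N) ω = x} ≤ ENNReal.ofReal (g (m + N)) := by
        intro m
        rw [ENNReal.le_ofReal_iff_toReal_le (measure_ne_top μ _) (hg_nonneg _)]
        exact hbound x (m + N) (hN1.trans (Nat.le_add_left N m))
      calc (∑' m, μ {ω | Y (m + N) ω = x})
          ≤ ∑' m, ENNReal.ofReal (g (m + N)) := ENNReal.tsum_le_tsum h1
        _ = ENNReal.ofReal (∑' m, g (m + N)) :=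
            (ENNReal.ofReal_tsum_of_nonneg (fun m => hg_nonneg _)
              ((summable_nat_add_iff N).mpr hgsum)).symm
        _ ≤ ENNReal.ofReal (ε / 2) := ENNReal.ofReal_le_ofReal hNtail.le
    have hmain : μ {ω | ∃ n, Y n ω = x} ≤ F x + ENNReal.ofReal (ε / 2) := by
      calc μ {ω | ∃ n, Y n ω = x}
          ≤ μ ((⋃ n ∈ Finset.range N, {ω | Y n ω = x}) ∪ ⋃ m, {ω | Y (m + N) ω = x}) :=
            measure_mono hcover
        _ ≤ μ (⋃ n ∈ Finset.range N, {ω | Y n ω = x}) + μ (⋃ m, {ω | Y (m + N) ω = x}) :=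
            measure_union_le _ _
        _ ≤ F x + ENNReal.ofReal (ε / 2) := by
            refine add_le_add ?_ ((measure_iUnion_le _).trans htailbound)
            exact measure_biUnion_finset_le _ _
    have hlt : ENNReal.ofReal ε < μ {ω | ∃ n, Y n ω = x} :=
      (ENNReal.ofReal_lt_iff_lt_toReal hε.le (measure_ne_top μ _)).mpr hx
    have hsplit : ENNReal.ofReal ε = ENNReal.ofReal (ε / 2) + ENNReal.ofReal (ε / 2) := by
      rw [← ENNReal.ofReal_add (by linarith) (by linarith)]
      norm_num
    have : ENNReal.ofReal (ε / 2) + ENNReal.ofReal (ε / 2) < F x + ENNReal.ofReal (ε / 2) := by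
      rw [← hsplit]; exact hlt.trans_le hmain
    exact (ENNReal.add_lt_add_iff_right ENNReal.ofReal_ne_top).mp this |>.le
  refine Set.Finite.subset ?_ hsub
  exact ENNReal.finite_const_le_of_tsum_ne_top hFsum
    (by simp [ENNReal.ofReal_eq_zero]; linarith)
end
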